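/- arXiv:2301.05857 — 7 statements merged into one kernel-verified Lean document; each statement's English description precedes it below -/
import Mathlib

section
/- Let (Ω, F, μ) be a probability space with filtration (F_n), and ω > 0 an integrable weight with ω_n := E(ω | F_n). Suppose there exist C > 1 and 0 < ε' < 1 such that E(ω χ_A | F_n)/ω_n ≤ C · E(χ_A | F_n)^{ε'} a.e. for all measurable A and all n. Then there exist q > 1 and C' > 0 such that E(ω^q | F_n) ≤ C' ω_n^q a.e. for all n. -/
open MeasureTheory
open scoped ENNReal NNReal

lemma condexp_pos_of_pos {Ω : Type*} {m0 : MeasurableSpace Ω} {μ : Measure Ω}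
    [IsProbabilityMeasure μ] (ℱ : Filtration ℕ m0) (n : ℕ)
    {ω : Ω → ℝ} (hpos : ∀ x, 0 < ω x) (hint : Integrable ω μ) :
    ∀ᵐ x ∂μ, 0 < (μ[ω | ℱ n]) x := by
  have hg_sm : StronglyMeasurable[ℱ n] (μ[ω|ℱ n]) := stronglyMeasurable_condExp
  set s : Set Ω := {x | (μ[ω|ℱ n]) x ≤ 0} with hs_def
  have hs : MeasurableSet[ℱ n] s := hg_sm.measurable measurableSet_Iic
  have h1 : ∫ x in s, (μ[ω|ℱ n]) x ∂μ = ∫ x in s, ω x ∂μ :=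
    setIntegral_condExp (ℱ.le n) hint hs
  have h2 : ∫ x in s, (μ[ω|ℱ n]) x ∂μ ≤ 0 :=
    setIntegral_nonpos (ℱ.le n _ hs) (fun x hx => hx)
  have hμs : μ s = 0 := by
    by_contra h
    have hpos' : 0 < ∫ x in s, ω x ∂μ := by
      rw [setIntegral_pos_iff_support_of_nonneg_ae
        (Filter.Eventually.of_forall fun x => (hpos x).le) hint.integrableOn]
      have hsupp : Function.support ω ∩ s = s := by
        have : Function.support ω = Set.univ := by
          ext x; simp [Function.support, (hpos x).ne']
        rw [this, Set.univ_inter]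
      rw [hsupp]
      exact zero_le.lt_of_ne (Ne.symm h)
    linarith [h1 ▸ h2]
  filter_upwards [measure_eq_zero_iff_ae_notMem.mp hμs] with x hx
  exact not_le.mp hx

lemma goodLambda {Ω : Type*} {m0 : MeasurableSpace Ω} {μ : Measure Ω}
    [IsProbabilityMeasure μ] (ℱ : Filtration ℕ m0) (n : ℕ)
    {ω : Ω → ℝ} (hω : Measurable ω) (hpos : ∀ x, 0 < ω x) (hint : Integrable ω μ)
    {C ε' : ℝ} (hC : 1 < C) (hε0 : 0 < ε') (hε1 : ε' < 1)
    (hCF : ∀ A : Set Ω, MeasurableSet A → ∀ n : ℕ,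
      ∀ᵐ x ∂μ, (μ[A.indicator ω | ℱ n]) x / (μ[ω | ℱ n]) x ≤
        C * ((μ[A.indicator (fun _ => (1 : ℝ)) | ℱ n]) x) ^ ε')
    (lam : ℝ) (hlam : 0 < lam) :
    ∀ᵐ x ∂μ,
      (μ[({x | lam * (μ[ω | ℱ n]) x ≤ ω x ∧ 0 < (μ[ω | ℱ n]) x}).indicator
          (fun _ => (1 : ℝ)) | ℱ n]) x ≤ (C / lam) ^ (1 - ε')⁻¹ := by
  set g : Ω → ℝ := μ[ω | ℱ n] with hg_def
  have hg_sm : StronglyMeasurable[ℱ n] g := stronglyMeasurable_condExp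
  have hg_meas : Measurable g := (hg_sm.mono (ℱ.le n)).measurable
  set B : Set Ω := {x | lam * g x ≤ ω x ∧ 0 < g x} with hB_def
  have hB_meas : MeasurableSet B :=
    (measurableSet_le (measurable_const.mul hg_meas) hω).inter
      (measurableSet_lt measurable_const hg_meas)
  have hg_int : Integrable g μ := integrable_condExp
  set χ : Ω → ℝ := B.indicator (fun _ => (1 : ℝ)) with hχ_def
  have hχ_int : Integrable χ μ := (integrable_const (1 : ℝ)).indicator hB_meas
  set u : Ω → ℝ := B.indicator ω with hu_def
  have hu_int : Integrable u μ := hint.indicator hB_meas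
  set v : Ω → ℝ := fun x => g x * χ x with hv_def
  have hχ_meas : Measurable χ := measurable_const.indicator hB_meas
  have hv_int : Integrable v μ := by
    refine hg_int.norm.mono' (hg_meas.mul hχ_meas).aestronglyMeasurable ?_
    refine Filter.Eventually.of_forall fun x => ?_
    have hχ1 : ‖χ x‖ ≤ 1 := by
      rw [hχ_def]; by_cases hx : x ∈ B <;> simp [Set.indicator_apply, hx]
    calc ‖v x‖ = ‖g x‖ * ‖χ x‖ := norm_mul _ _
      _ ≤ ‖g x‖ * 1 := mul_le_mul_of_nonneg_left hχ1 (norm_nonneg _)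
      _ = ‖g x‖ := mul_one _
  have h1 : (lam • v) ≤ᵐ[μ] u := by
    refine Filter.Eventually.of_forall fun x => ?_
    simp only [Pi.smul_apply, smul_eq_mul, hv_def, hu_def, hχ_def]
    by_cases hx : x ∈ B
    · simp only [Set.indicator_of_mem hx]
      calc lam * (g x * 1) = lam * g x := by ring
        _ ≤ ω x := hx.1
    · simp [Set.indicator_of_notMem hx]
  have h2 : μ[lam • v|ℱ n] =ᵐ[μ] lam • μ[v|ℱ n] := condExp_smul lam v _
  have h3 : μ[v|ℱ n] =ᵐ[μ] g * μ[χ|ℱ n] :=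
    condExp_mul_of_stronglyMeasurable_left hg_sm (by exact hv_int) hχ_int
  have h4 : μ[lam • v|ℱ n] ≤ᵐ[μ] μ[u|ℱ n] := condExp_mono (hv_int.smul lam) hu_int h1
  have h5 := hCF B hB_meas n
  have h6 : 0 ≤ᵐ[μ] μ[χ|ℱ n] :=
    condExp_nonneg (Filter.Eventually.of_forall fun x =>
      Set.indicator_apply_nonneg fun _ => zero_le_one)
  have hg_pos : ∀ᵐ x ∂μ, 0 < g x := condexp_pos_of_pos ℱ n hpos hint
  filter_upwards [h2, h3, h4, h5, h6, hg_pos] with x h2x h3x h4x h5x h6x hgx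
  set P : ℝ := (μ[χ|ℱ n]) x with hP_def
  have h6x' : (0:ℝ) ≤ P := h6x
  have key : lam * P ≤ C * P ^ ε' := by
    have e1 : lam * (g x * P) ≤ (μ[u|ℱ n]) x := by
      have := h4x
      rw [h2x] at this
      simpa [h3x, hP_def] using this
    have e2 : (μ[u|ℱ n]) x / g x ≤ C * P ^ ε' := by
      rw [← hg_def] at h5x
      exact h5x
    have e2' : (μ[u|ℱ n]) x ≤ C * P ^ ε' * g x := (div_le_iff₀ hgx).mp e2
    nlinarith [e1.trans e2', hgx]
  have hClam : 0 < C / lam := div_pos (lt_trans one_pos hC) hlam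
  rcases eq_or_lt_of_le h6x' with hP0 | hP0
  · rw [← hP0]
    positivity
  · have hPe : P ^ (1 - ε') ≤ C / lam := by
      have hrw : P ^ (1 - ε') = P / P ^ ε' := by
        rw [Real.rpow_sub hP0, Real.rpow_one]
      rw [hrw, div_le_div_iff₀ (Real.rpow_pos_of_pos hP0 _) hlam]
      linarith [key]
    have hPP : (P ^ (1 - ε')) ^ (1 - ε')⁻¹ = P := by
      rw [← Real.rpow_mul h6x', mul_inv_cancel₀ (by linarith : (1:ℝ) - ε' ≠ 0), Real.rpow_one]
    calc P = (P ^ (1 - ε')) ^ (1 - ε')⁻¹ := hPP.symm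
      _ ≤ (C / lam) ^ (1 - ε')⁻¹ :=
        Real.rpow_le_rpow (Real.rpow_nonneg h6x' _) hPe (inv_nonneg.mpr (by linarith))
lemma measB_le {Ω : Type*} {m0 : MeasurableSpace Ω} {μ : Measure Ω}
    [IsProbabilityMeasure μ] (ℱ : Filtration ℕ m0) (n : ℕ)
    {ω : Ω → ℝ} (hω : Measurable ω) (hpos : ∀ x, 0 < ω x) (hint : Integrable ω μ)
    {C ε' : ℝ} (hC : 1 < C) (hε0 : 0 < ε') (hε1 : ε' < 1)
    (hCF : ∀ A : Set Ω, MeasurableSet A → ∀ n : ℕ,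
      ∀ᵐ x ∂μ, (μ[A.indicator ω | ℱ n]) x / (μ[ω | ℱ n]) x ≤
        C * ((μ[A.indicator (fun _ => (1 : ℝ)) | ℱ n]) x) ^ ε')
    (lam : ℝ) (hlam : 0 < lam) :
    μ {x | lam * (μ[ω | ℱ n]) x ≤ ω x ∧ 0 < (μ[ω | ℱ n]) x} ≤
      ENNReal.ofReal ((C / lam) ^ (1 - ε')⁻¹) := by
  set g : Ω → ℝ := μ[ω | ℱ n] with hg_def
  have hg_meas : Measurable g :=
    ((stronglyMeasurable_condExp (f := ω)).mono (ℱ.le n)).measurable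
  set B : Set Ω := {x | lam * g x ≤ ω x ∧ 0 < g x} with hB_def
  have hB_meas : MeasurableSet B :=
    (measurableSet_le (measurable_const.mul hg_meas) hω).inter
      (measurableSet_lt measurable_const hg_meas)
  set χ : Ω → ℝ := B.indicator (fun _ => (1 : ℝ)) with hχ_def
  have hχ_int : Integrable χ μ := (integrable_const (1 : ℝ)).indicator hB_meas
  have h1 : (μ B).toReal = ∫ x, χ x ∂μ := by
    have hr : ∫ x, χ x ∂μ = ∫ x, B.indicator 1 x ∂μ := rfl
    rw [hr, integral_indicator_one hB_meas]; rfl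
  have h2 : ∫ x, χ x ∂μ = ∫ x, (μ[χ | ℱ n]) x ∂μ := (integral_condExp (ℱ.le n)).symm
  have h3 : ∫ x, (μ[χ | ℱ n]) x ∂μ ≤ ∫ _, (C / lam) ^ (1 - ε')⁻¹ ∂μ := by
    refine integral_mono_ae integrable_condExp (integrable_const _) ?_
    exact goodLambda ℱ n hω hpos hint hC hε0 hε1 hCF lam hlam
  have h4 : ∫ _x, (C / lam) ^ (1 - ε')⁻¹ ∂μ = (C / lam) ^ (1 - ε')⁻¹ := by
    simp
  have h5 : (μ B).toReal ≤ (C / lam) ^ (1 - ε')⁻¹ := by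
    rw [h1, h2]; rw [h4] at h3; exact h3
  calc μ B = ENNReal.ofReal ((μ B).toReal) := (ENNReal.ofReal_toReal (measure_ne_top μ B)).symm
    _ ≤ ENNReal.ofReal ((C / lam) ^ (1 - ε')⁻¹) := ENNReal.ofReal_le_ofReal h5
theorem stmt7 {Ω : Type*} {m0 : MeasurableSpace Ω} {μ : Measure Ω} [IsProbabilityMeasure μ]
    (ℱ : Filtration ℕ m0)
    {ω : Ω → ℝ} (hω : Measurable ω) (hpos : ∀ x, 0 < ω x) (hint : Integrable ω μ)
    (hCF : ∃ C > 1, ∃ ε' : ℝ, 0 < ε' ∧ ε' < 1 ∧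
      ∀ A : Set Ω, MeasurableSet A → ∀ n : ℕ,
        ∀ᵐ x ∂μ, (μ[A.indicator ω | ℱ n]) x / (μ[ω | ℱ n]) x ≤
          C * ((μ[A.indicator (fun _ => (1 : ℝ)) | ℱ n]) x) ^ ε') :
    ∃ q : ℝ, 1 < q ∧ ∃ C' > 0, ∀ n : ℕ,
      ∀ᵐ x ∂μ, (μ[fun y => ω y ^ q | ℱ n]) x ≤ C' * ((μ[ω | ℱ n]) x) ^ q := by
  obtain ⟨C, hC, ε', hε0, hε1, hCF⟩ := hCF
  have hC0 : (0:ℝ) < C := lt_trans one_pos hC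
  have h1ε : (0:ℝ) < 1 - ε' := by linarith
  set r : ℝ := (1 - ε')⁻¹ with hr_def
  have hr1 : 1 < r := (one_lt_inv_iff₀).2 ⟨h1ε, by linarith⟩
  set q : ℝ := (1 + r)/2 with hq_def
  have hq1 : 1 < q := by rw [hq_def]; linarith
  have hqr : q < r := by rw [hq_def]; linarith
  have hq0 : 0 < q := lt_trans one_pos hq1
  set ρ : ℝ := (2:ℝ) ^ (q - r) with hρ_def
  have hρ0 : 0 < ρ := Real.rpow_pos_of_pos two_pos _
  have hρ1 : ρ < 1 := Real.rpow_lt_one_of_one_lt_of_neg one_lt_two (by linarith)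
  have h1ρ : 0 < 1 - ρ := by linarith
  set c : ℝ := 1 + 2 ^ q * C ^ r * (1 - ρ)⁻¹ with hc_def
  have hc0 : 0 < c := by
    have h2q : (0:ℝ) < 2 ^ q := Real.rpow_pos_of_pos two_pos _
    have hCr : (0:ℝ) < C ^ r := Real.rpow_pos_of_pos hC0 _
    have := inv_pos.mpr h1ρ
    rw [hc_def]; positivity
  refine ⟨q, hq1, c, hc0, fun n => ?_⟩
  by_cases hωq : Integrable (fun y => ω y ^ q) μ
  swap
  · rw [condExp_of_not_integrable hωq]
    filter_upwards [condexp_pos_of_pos ℱ n hpos hint] with x hx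
    simp only [Pi.zero_apply]
    exact mul_nonneg hc0.le (Real.rpow_nonneg hx.le q)
  -- main case
  set g : Ω → ℝ := μ[ω | ℱ n] with hg_def
  have hg_sm : StronglyMeasurable[ℱ n] g := stronglyMeasurable_condExp
  have hg_meas : Measurable g := (hg_sm.mono (ℱ.le n)).measurable
  have hg_int : Integrable g μ := integrable_condExp
  have hg_pos : ∀ᵐ x ∂μ, 0 < g x := condexp_pos_of_pos ℱ n hpos hint
  set Bs : ℝ → Set Ω := fun lam => {x | lam * g x ≤ ω x ∧ 0 < g x} with hBs_def
  have hB_meas : ∀ lam, MeasurableSet (Bs lam) := fun lam =>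
    (measurableSet_le (measurable_const.mul hg_meas) hω).inter
      (measurableSet_lt measurable_const hg_meas)
  have hB_anti : ∀ {l1 l2 : ℝ}, l1 ≤ l2 → Bs l2 ⊆ Bs l1 := by
    intro l1 l2 h x hx
    exact ⟨le_trans (mul_le_mul_of_nonneg_right h hx.2.le) hx.1, hx.2⟩
  have hGoodAll : ∀ᵐ x ∂μ, ∀ k : ℕ,
      (μ[(Bs ((2:ℝ)^(k:ℝ))).indicator (fun _ => (1:ℝ)) | ℱ n]) x ≤ (C / 2^(k:ℝ)) ^ r :=
    ae_all_iff.mpr fun k =>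
      goodLambda ℱ n hω hpos hint hC hε0 hε1 hCF ((2:ℝ)^(k:ℝ)) (Real.rpow_pos_of_pos two_pos _)
  have hμB : ∀ k : ℕ, μ (Bs ((2:ℝ)^(k:ℝ))) ≤ ENNReal.ofReal ((C / 2^(k:ℝ)) ^ r) := fun k =>
    measB_le ℱ n hω hpos hint hC hε0 hε1 hCF ((2:ℝ)^(k:ℝ)) (Real.rpow_pos_of_pos two_pos _)
  set F : Ω → ℝ := fun x => (ω x / g x) ^ q with hF_def
  have hF_meas : Measurable F :=
    (Real.continuous_rpow_const hq0.le).measurable.comp (hω.div hg_meas)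
  have hrk : ∀ k : ℕ, ρ ^ k = (2:ℝ) ^ ((q-r)*(k:ℝ)) := by
    intro k
    rw [hρ_def, ← Real.rpow_natCast ((2:ℝ)^(q-r)) k, ← Real.rpow_mul two_pos.le]
  have hterm : ∀ k : ℕ, (2:ℝ)^(((k:ℝ)+1)*q) * (C / 2^(k:ℝ))^r = 2^q * C^r * ρ^k := by
    intro k
    have hne : (2:ℝ) ^ ((k:ℝ)*r) ≠ 0 := (Real.rpow_pos_of_pos two_pos _).ne'
    rw [hrk k, Real.div_rpow hC0.le (Real.rpow_nonneg two_pos.le _), ← Real.rpow_mul two_pos.le,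
      show ((k:ℝ)+1)*q = q + (q-r)*(k:ℝ) + (k:ℝ)*r by ring, Real.rpow_add two_pos,
      Real.rpow_add two_pos]
    field_simp
  have hgeom : ∀ N : ℕ, ∑ k ∈ Finset.range N, ρ^k ≤ (1-ρ)⁻¹ := by
    intro N
    have hsumm : Summable (fun k : ℕ => ρ ^ k) := summable_geometric_of_lt_one hρ0.le hρ1
    calc ∑ k ∈ Finset.range N, ρ^k ≤ ∑' k, ρ^k :=
          Summable.sum_le_tsum _ (fun k _ => (pow_pos hρ0 k).le) hsumm
      _ = (1-ρ)⁻¹ := tsum_geometric_of_lt_one hρ0.le hρ1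
  -- the key floor construction
  have hfloor : ∀ x : Ω, 0 < g x → 1 < ω x / g x → ∃ k : ℕ,
      x ∈ Bs ((2:ℝ)^(k:ℝ)) ∧ F x ≤ 2^(((k:ℝ)+1)*q) ∧ (2:ℝ)^((k:ℝ)) ≤ ω x / g x := by
    intro x hgx hf1
    set f := ω x / g x with hf_def
    have hf0 : 0 < f := div_pos (hpos x) hgx
    refine ⟨⌊Real.logb 2 f⌋₊, ?_, ?_, ?_⟩
    case refine_3 =>
      calc (2:ℝ)^((⌊Real.logb 2 f⌋₊:ℝ)) ≤ 2 ^ Real.logb 2 f :=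
            Real.rpow_le_rpow_of_exponent_le one_le_two
              (Nat.floor_le (Real.logb_nonneg one_lt_two hf1.le))
        _ = f := Real.rpow_logb two_pos (by norm_num) hf0
    case refine_1 =>
      have h2k : (2:ℝ)^((⌊Real.logb 2 f⌋₊:ℝ)) ≤ f := by
        calc (2:ℝ)^((⌊Real.logb 2 f⌋₊:ℝ)) ≤ 2 ^ Real.logb 2 f :=
              Real.rpow_le_rpow_of_exponent_le one_le_two
                (Nat.floor_le (Real.logb_nonneg one_lt_two hf1.le))
          _ = f := Real.rpow_logb two_pos (by norm_num) hf0
      exact ⟨(le_div_iff₀ hgx).mp h2k, hgx⟩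
    case refine_2 =>
      have hf2 : f ≤ (2:ℝ)^((⌊Real.logb 2 f⌋₊:ℝ)+1) := by
        calc f = 2 ^ Real.logb 2 f := (Real.rpow_logb two_pos (by norm_num) hf0).symm
          _ ≤ (2:ℝ)^((⌊Real.logb 2 f⌋₊:ℝ)+1) :=
              Real.rpow_le_rpow_of_exponent_le one_le_two (Nat.lt_floor_add_one _).le
      calc F x = f ^ q := rfl
        _ ≤ ((2:ℝ)^((⌊Real.logb 2 f⌋₊:ℝ)+1)) ^ q := Real.rpow_le_rpow hf0.le hf2 hq0.le
        _ = 2^(((⌊Real.logb 2 f⌋₊:ℝ)+1)*q) := by rw [← Real.rpow_mul two_pos.le]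
  set T : ℕ → ℝ≥0∞ := fun k => ENNReal.ofReal ((2:ℝ)^(((k:ℝ)+1)*q)) with hT_def
  set G : Ω → ℝ≥0∞ := fun x =>
    1 + ∑' k : ℕ, (Bs ((2:ℝ)^(k:ℝ))).indicator (fun _ => T k) x with hG_def
  have hFG : ∀ᵐ x ∂μ, (‖F x‖₊ : ℝ≥0∞) ≤ G x := by
    filter_upwards [hg_pos] with x hgx
    have hf0 : 0 < ω x / g x := div_pos (hpos x) hgx
    have hFnn : 0 ≤ F x := Real.rpow_nonneg hf0.le _
    rcases le_or_gt (ω x / g x) 1 with hle | hlt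
    · have : F x ≤ 1 := Real.rpow_le_one hf0.le hle hq0.le
      calc (‖F x‖₊ : ℝ≥0∞) = ENNReal.ofReal (F x) := Real.enorm_eq_ofReal hFnn
        _ ≤ 1 := by simpa using ENNReal.ofReal_le_ofReal this
        _ ≤ G x := le_self_add
    · obtain ⟨k, hxB, hFb, _⟩ := hfloor x hgx hlt
      calc (‖F x‖₊ : ℝ≥0∞) = ENNReal.ofReal (F x) := Real.enorm_eq_ofReal hFnn
        _ ≤ T k := ENNReal.ofReal_le_ofReal hFb
        _ = (Bs ((2:ℝ)^(k:ℝ))).indicator (fun _ => T k) x := by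
            rw [Set.indicator_of_mem hxB]
        _ ≤ ∑' j : ℕ, (Bs ((2:ℝ)^(j:ℝ))).indicator (fun _ => T j) x := ENNReal.le_tsum k
        _ ≤ G x := le_add_self
  have hGsum : ∫⁻ x, (∑' k : ℕ, (Bs ((2:ℝ)^(k:ℝ))).indicator (fun _ => T k) x) ∂μ ≤
      ENNReal.ofReal (2^q * C^r * (1-ρ)⁻¹) := by
    rw [lintegral_tsum fun k => (measurable_const.indicator (hB_meas _)).aemeasurable]
    have hsummand : ∀ k : ℕ, ∫⁻ x, (Bs ((2:ℝ)^(k:ℝ))).indicator (fun _ => T k) x ∂μ ≤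
        ENNReal.ofReal (2^q * C^r * ρ^k) := by
      intro k
      rw [lintegral_indicator_const (hB_meas _)]
      calc T k * μ (Bs ((2:ℝ)^(k:ℝ))) ≤ T k * ENNReal.ofReal ((C / 2^(k:ℝ)) ^ r) := by
            gcongr
            exact hμB k
        _ = ENNReal.ofReal ((2:ℝ)^(((k:ℝ)+1)*q) * (C / 2^(k:ℝ)) ^ r) := by
            rw [hT_def, ← ENNReal.ofReal_mul (Real.rpow_nonneg two_pos.le _)]
        _ = ENNReal.ofReal (2^q * C^r * ρ^k) := by rw [hterm k]
    calc ∑' k : ℕ, ∫⁻ x, (Bs ((2:ℝ)^(k:ℝ))).indicator (fun _ => T k) x ∂μ ≤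
          ∑' k : ℕ, ENNReal.ofReal (2^q * C^r * ρ^k) := ENNReal.tsum_le_tsum hsummand
      _ = ENNReal.ofReal (∑' k : ℕ, 2^q * C^r * ρ^k) := by
          rw [ENNReal.ofReal_tsum_of_nonneg]
          · intro k
            positivity
          · exact (summable_geometric_of_lt_one hρ0.le hρ1).mul_left _
      _ = ENNReal.ofReal (2^q * C^r * (1-ρ)⁻¹) := by
          rw [tsum_mul_left, tsum_geometric_of_lt_one hρ0.le hρ1]
  have hF_int : Integrable F μ := by
    refine ⟨hF_meas.aestronglyMeasurable, ?_⟩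
    have h1 : ∫⁻ x, (‖F x‖₊ : ℝ≥0∞) ∂μ ≤ ∫⁻ x, G x ∂μ := lintegral_mono_ae hFG
    have h2 : ∫⁻ x, G x ∂μ =
        ∫⁻ _, (1:ℝ≥0∞) ∂μ + ∫⁻ x, (∑' k : ℕ, (Bs ((2:ℝ)^(k:ℝ))).indicator (fun _ => T k) x) ∂μ := by
      rw [hG_def, lintegral_add_left measurable_const]
    have h3 : ∫⁻ x, G x ∂μ < ⊤ := by
      rw [h2, lintegral_one]
      exact ENNReal.add_lt_top.mpr ⟨by simp, lt_of_le_of_lt hGsum ENNReal.ofReal_lt_top⟩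
    exact lt_of_le_of_lt h1 h3
  set S : ℕ → Ω → ℝ := fun N => (fun _ => (1:ℝ)) +
    ∑ k ∈ Finset.range N, ((2:ℝ)^(((k:ℝ)+1)*q)) • (Bs ((2:ℝ)^(k:ℝ))).indicator (fun _ => (1:ℝ))
    with hS_def
  set R : ℕ → Ω → ℝ := fun N => (Bs ((2:ℝ)^(N:ℝ))).indicator F with hR_def
  have hS_int : ∀ N, Integrable (S N) μ := fun N =>
    (integrable_const 1).add (integrable_finset_sum' _ fun k _ =>
      (((integrable_const (1:ℝ)).indicator (hB_meas _)).smul _))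
  have hR_int : ∀ N, Integrable (R N) μ := fun N => hF_int.indicator (hB_meas _)
  have hSnn : ∀ N x, 0 ≤ ∑ k ∈ Finset.range N,
      (((2:ℝ)^(((k:ℝ)+1)*q)) • (Bs ((2:ℝ)^(k:ℝ))).indicator (fun _ => (1:ℝ))) x := by
    intro N x
    refine Finset.sum_nonneg fun k _ => ?_
    simp only [Pi.smul_apply, smul_eq_mul]
    exact mul_nonneg (Real.rpow_nonneg two_pos.le _)
      (Set.indicator_apply_nonneg fun _ => zero_le_one)
  have hDom : ∀ N : ℕ, F ≤ᵐ[μ] S N + R N := by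
    intro N
    filter_upwards [hg_pos] with x hgx
    have hf0 : 0 < ω x / g x := div_pos (hpos x) hgx
    have hFnn : 0 ≤ F x := Real.rpow_nonneg hf0.le _
    have hSx : S N x = 1 + ∑ k ∈ Finset.range N,
        (((2:ℝ)^(((k:ℝ)+1)*q)) • (Bs ((2:ℝ)^(k:ℝ))).indicator (fun _ => (1:ℝ))) x := by
      rw [hS_def]; simp [Finset.sum_apply]
    have hS1 : (1:ℝ) ≤ S N x := by rw [hSx]; linarith [hSnn N x]
    by_cases hcase : (2:ℝ)^((N:ℝ)) ≤ ω x / g x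
    · have hxB : x ∈ Bs ((2:ℝ)^(N:ℝ)) := ⟨(le_div_iff₀ hgx).mp hcase, hgx⟩
      have hRx : R N x = F x := Set.indicator_of_mem hxB F
      calc F x = 0 + F x := (zero_add _).symm
        _ ≤ S N x + R N x := by rw [hRx]; gcongr; linarith
    · have hxB : x ∉ Bs ((2:ℝ)^(N:ℝ)) := by
        intro hx
        exact hcase ((le_div_iff₀ hgx).mpr hx.1)
      have hRx : R N x = 0 := Set.indicator_of_notMem hxB F
      rcases le_or_gt (ω x / g x) 1 with hle | hlt
      · have : F x ≤ 1 := Real.rpow_le_one hf0.le hle hq0.le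
        calc F x ≤ 1 := this
          _ ≤ S N x + R N x := by rw [hRx]; simpa using hS1
      · obtain ⟨k, hxBk, hFb, h2k⟩ := hfloor x hgx hlt
        have hkN : k < N := by
          have h2 : (2:ℝ)^((k:ℝ)) < (2:ℝ)^((N:ℝ)) :=
            lt_of_le_of_lt h2k (lt_of_not_ge hcase)
          have := (Real.rpow_lt_rpow_left_iff one_lt_two).mp h2
          exact_mod_cast this
        have hsingle : (2:ℝ)^(((k:ℝ)+1)*q) ≤ ∑ j ∈ Finset.range N,
            (((2:ℝ)^(((j:ℝ)+1)*q)) • (Bs ((2:ℝ)^(j:ℝ))).indicator (fun _ => (1:ℝ))) x := by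
          have hmem : k ∈ Finset.range N := Finset.mem_range.mpr hkN
          have heval : (((2:ℝ)^(((k:ℝ)+1)*q)) • (Bs ((2:ℝ)^(k:ℝ))).indicator (fun _ => (1:ℝ))) x
              = (2:ℝ)^(((k:ℝ)+1)*q) := by
            simp only [Pi.smul_apply, smul_eq_mul, Set.indicator_of_mem hxBk, mul_one]
          calc (2:ℝ)^(((k:ℝ)+1)*q) = _ := heval.symm
            _ ≤ _ := Finset.single_le_sum (f := fun j : ℕ =>
                (((2:ℝ)^(((j:ℝ)+1)*q)) • (Bs ((2:ℝ)^(j:ℝ))).indicator (fun _ => (1:ℝ))) x)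
                (fun j _ => by
                  simp only [Pi.smul_apply, smul_eq_mul]
                  exact mul_nonneg (Real.rpow_nonneg two_pos.le _)
                    (Set.indicator_apply_nonneg fun _ => zero_le_one)) hmem
        calc F x ≤ (2:ℝ)^(((k:ℝ)+1)*q) := hFb
          _ ≤ S N x + R N x := by
              rw [hRx, hSx]
              linarith [hsingle]
  have hScond : ∀ N : ℕ, ∀ᵐ x ∂μ, (μ[S N | ℱ n]) x ≤ c := by
    intro N
    have hadd : μ[S N|ℱ n] =ᵐ[μ] μ[(fun _ => (1:ℝ))|ℱ n] +
        μ[∑ k ∈ Finset.range N,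
          ((2:ℝ)^(((k:ℝ)+1)*q)) • (Bs ((2:ℝ)^(k:ℝ))).indicator (fun _ => (1:ℝ))|ℱ n] :=
      condExp_add (integrable_const 1) (integrable_finset_sum' _ fun k _ =>
        (((integrable_const (1:ℝ)).indicator (hB_meas _)).smul _)) _
    have hsum : μ[∑ k ∈ Finset.range N,
          ((2:ℝ)^(((k:ℝ)+1)*q)) • (Bs ((2:ℝ)^(k:ℝ))).indicator (fun _ => (1:ℝ))|ℱ n] =ᵐ[μ]
        ∑ k ∈ Finset.range N,
          μ[((2:ℝ)^(((k:ℝ)+1)*q)) • (Bs ((2:ℝ)^(k:ℝ))).indicator (fun _ => (1:ℝ))|ℱ n] :=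
      condExp_finsetSum (fun k _ =>
        (((integrable_const (1:ℝ)).indicator (hB_meas _)).smul _)) _
    have hsmul : ∀ k : ℕ,
        μ[((2:ℝ)^(((k:ℝ)+1)*q)) • (Bs ((2:ℝ)^(k:ℝ))).indicator (fun _ => (1:ℝ))|ℱ n] =ᵐ[μ]
        ((2:ℝ)^(((k:ℝ)+1)*q)) • μ[(Bs ((2:ℝ)^(k:ℝ))).indicator (fun _ => (1:ℝ))|ℱ n] :=
      fun k => condExp_smul _ _ _
    have hsmul_all : ∀ᵐ x ∂μ, ∀ k : ℕ,
        (μ[((2:ℝ)^(((k:ℝ)+1)*q)) • (Bs ((2:ℝ)^(k:ℝ))).indicator (fun _ => (1:ℝ))|ℱ n]) x =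
        (((2:ℝ)^(((k:ℝ)+1)*q)) • μ[(Bs ((2:ℝ)^(k:ℝ))).indicator (fun _ => (1:ℝ))|ℱ n]) x :=
      ae_all_iff.mpr fun k => hsmul k
    have hconst : μ[(fun _ => (1:ℝ))|ℱ n] = fun _ => (1:ℝ) := condExp_const (ℱ.le n) 1
    filter_upwards [hadd, hsum, hsmul_all, hGoodAll] with x hx1 hx2 hx3 hx4
    have hx2' : (μ[∑ k ∈ Finset.range N,
          ((2:ℝ)^(((k:ℝ)+1)*q)) • (Bs ((2:ℝ)^(k:ℝ))).indicator (fun _ => (1:ℝ))|ℱ n]) x =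
        ∑ k ∈ Finset.range N,
          (μ[((2:ℝ)^(((k:ℝ)+1)*q)) • (Bs ((2:ℝ)^(k:ℝ))).indicator (fun _ => (1:ℝ))|ℱ n]) x := by
      rw [hx2]; exact Finset.sum_apply _ _ _
    have hsum_le : ∑ k ∈ Finset.range N,
          (μ[((2:ℝ)^(((k:ℝ)+1)*q)) • (Bs ((2:ℝ)^(k:ℝ))).indicator (fun _ => (1:ℝ))|ℱ n]) x ≤
        ∑ k ∈ Finset.range N, 2^q * C^r * ρ^k := by
      refine Finset.sum_le_sum fun k hk => ?_
      rw [hx3 k]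
      have hP := hx4 k
      calc (((2:ℝ)^(((k:ℝ)+1)*q)) •
            μ[(Bs ((2:ℝ)^(k:ℝ))).indicator (fun _ => (1:ℝ))|ℱ n]) x
          = ((2:ℝ)^(((k:ℝ)+1)*q)) *
            (μ[(Bs ((2:ℝ)^(k:ℝ))).indicator (fun _ => (1:ℝ))|ℱ n]) x := rfl
        _ ≤ ((2:ℝ)^(((k:ℝ)+1)*q)) * (C / 2^(k:ℝ)) ^ r :=
            mul_le_mul_of_nonneg_left hP (Real.rpow_nonneg two_pos.le _)
        _ = 2^q * C^r * ρ^k := hterm k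
    have hgeo : ∑ k ∈ Finset.range N, 2^q * C^r * ρ^k ≤ 2^q * C^r * (1-ρ)⁻¹ := by
      rw [← Finset.mul_sum]
      refine mul_le_mul_of_nonneg_left (hgeom N) ?_
      positivity
    calc (μ[S N|ℱ n]) x
        = (μ[(fun _ => (1:ℝ))|ℱ n]) x + (μ[∑ k ∈ Finset.range N,
            ((2:ℝ)^(((k:ℝ)+1)*q)) • (Bs ((2:ℝ)^(k:ℝ))).indicator (fun _ => (1:ℝ))|ℱ n]) x := hx1
      _ = 1 + ∑ k ∈ Finset.range N,
            (μ[((2:ℝ)^(((k:ℝ)+1)*q)) • (Bs ((2:ℝ)^(k:ℝ))).indicator (fun _ => (1:ℝ))|ℱ n]) x := by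
          rw [hconst, hx2']
      _ ≤ 1 + 2^q * C^r * (1-ρ)⁻¹ := by linarith [hsum_le.trans hgeo]
      _ = c := hc_def.symm
  have hMain : ∀ N : ℕ, ∀ᵐ x ∂μ, (μ[F | ℱ n]) x ≤ c + (μ[R N | ℱ n]) x := by
    intro N
    have h1 : μ[F|ℱ n] ≤ᵐ[μ] μ[S N + R N|ℱ n] :=
      condExp_mono hF_int ((hS_int N).add (hR_int N)) (hDom N)
    have h2 : μ[S N + R N|ℱ n] =ᵐ[μ] μ[S N|ℱ n] + μ[R N|ℱ n] := condExp_add (hS_int N) (hR_int N) _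
    filter_upwards [h1, h2, hScond N] with x hx1 hx2 hx3
    calc (μ[F|ℱ n]) x ≤ (μ[S N + R N|ℱ n]) x := hx1
      _ = (μ[S N|ℱ n]) x + (μ[R N|ℱ n]) x := by rw [hx2]; rfl
      _ ≤ c + (μ[R N|ℱ n]) x := by gcongr
  have hRnonneg : ∀ N, 0 ≤ᵐ[μ] μ[R N|ℱ n] := by
    intro N
    refine condExp_nonneg ?_
    filter_upwards [hg_pos] with x hgx
    exact Set.indicator_apply_nonneg fun _ => Real.rpow_nonneg (div_pos (hpos x) hgx).le _
  have hint_RN : ∀ N, ∫ x, (μ[R N|ℱ n]) x ∂μ = ∫ x in Bs ((2:ℝ)^(N:ℝ)), F x ∂μ := by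
    intro N
    rw [integral_condExp (ℱ.le n), hR_def]
    exact integral_indicator (hB_meas _)
  have hTend : Filter.Tendsto (fun N : ℕ => ∫ x in Bs ((2:ℝ)^(N:ℝ)), F x ∂μ)
      Filter.atTop (nhds 0) := by
    have hanti : Antitone fun N : ℕ => Bs ((2:ℝ)^(N:ℝ)) := fun N M h =>
      hB_anti (Real.rpow_le_rpow_of_exponent_le one_le_two (Nat.cast_le.mpr h))
    have hiInter : (⋂ N : ℕ, Bs ((2:ℝ)^(N:ℝ))) = ∅ := by
      ext x
      simp only [Set.mem_iInter, Set.mem_empty_iff_false, iff_false]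
      intro hx
      have hgx : 0 < g x := (hx 0).2
      obtain ⟨N, hN⟩ := pow_unbounded_of_one_lt (ω x / g x) one_lt_two
      have h2N : (2:ℝ)^((N:ℝ)) ≤ ω x / g x := (le_div_iff₀ hgx).mpr (hx N).1
      rw [← Real.rpow_natCast (2:ℝ) N] at hN
      exact absurd h2N (not_le.mpr hN)
    have hT := tendsto_setIntegral_of_antitone (f := F) (μ := μ)
      (fun N : ℕ => hB_meas _) hanti ⟨0, hF_int.integrableOn⟩
    rw [hiInter] at hT
    simpa using hT
  have hlim : ∀ᵐ x ∂μ, (μ[F|ℱ n]) x ≤ c := by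
    have hzero : ∀ m : ℕ, μ {x | c + 1/((m:ℝ)+1) ≤ (μ[F|ℱ n]) x} = 0 := by
      intro m
      set δ : ℝ := 1/((m:ℝ)+1) with hδ_def
      have hδ : 0 < δ := by positivity
      set a : ℝ := (μ {x | c + δ ≤ (μ[F|ℱ n]) x}).toReal with ha_def
      have ha0 : 0 ≤ a := ENNReal.toReal_nonneg
      have key : ∀ N : ℕ, δ * a ≤ ∫ x in Bs ((2:ℝ)^(N:ℝ)), F x ∂μ := by
        intro N
        have hsub : μ {x | c + δ ≤ (μ[F|ℱ n]) x} ≤ μ {x | δ ≤ (μ[R N|ℱ n]) x} := by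
          refine measure_mono_ae ?_
          filter_upwards [hMain N] with x hx hxs
          have hxs' : c + δ ≤ (μ[F|ℱ n]) x := hxs
          show δ ≤ (μ[R N|ℱ n]) x
          linarith
        have hMarkov := mul_meas_ge_le_integral_of_nonneg (hRnonneg N) integrable_condExp δ
        calc δ * a ≤ δ * (μ {x | δ ≤ (μ[R N|ℱ n]) x}).toReal := by
              refine mul_le_mul_of_nonneg_left ?_ hδ.le
              exact ENNReal.toReal_mono (measure_ne_top _ _) hsub
          _ ≤ ∫ x, (μ[R N|ℱ n]) x ∂μ := hMarkov
          _ = ∫ x in Bs ((2:ℝ)^(N:ℝ)), F x ∂μ := hint_RN N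
      have hle0 : δ * a ≤ 0 := ge_of_tendsto' hTend key
      have ha : a = 0 := le_antisymm (by nlinarith) ha0
      rcases (ENNReal.toReal_eq_zero_iff _).mp ha with h | h
      · exact h
      · exact absurd h (measure_ne_top _ _)
    have hae := ae_all_iff.mpr fun m : ℕ => measure_eq_zero_iff_ae_notMem.mp (hzero m)
    filter_upwards [hae] with x hx
    by_contra hlt
    push_neg at hlt
    obtain ⟨m, hm⟩ := exists_nat_one_div_lt (sub_pos.mpr hlt)
    refine hx m ?_
    show c + 1/((m:ℝ)+1) ≤ (μ[F|ℱ n]) x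
    linarith
  -- conclusion
  have heq : (fun y => ω y ^ q) =ᵐ[μ] fun x => g x ^ q * F x := by
    filter_upwards [hg_pos] with x hgx
    rw [hF_def]
    rw [← Real.mul_rpow hgx.le (div_pos (hpos x) hgx).le]
    congr 1
    field_simp
  have hgq_sm : StronglyMeasurable[ℱ n] (fun x => g x ^ q) :=
    ((Real.continuous_rpow_const hq0.le).measurable.comp hg_sm.measurable).stronglyMeasurable
  have hmul_int : Integrable (fun x => g x ^ q * F x) μ := hωq.congr heq
  have hmul : μ[(fun x => g x ^ q) * F|ℱ n] =ᵐ[μ] (fun x => g x ^ q) * μ[F|ℱ n] :=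
    condExp_mul_of_stronglyMeasurable_left hgq_sm (by exact hmul_int) hF_int
  have hcongr : μ[fun y => ω y ^ q|ℱ n] =ᵐ[μ] μ[(fun x => g x ^ q) * F|ℱ n] :=
    condExp_congr_ae heq
  filter_upwards [hcongr, hmul, hlim, hg_pos] with x h1 h2 h3 hgx
  calc (μ[fun y => ω y ^ q|ℱ n]) x = ((fun x => g x ^ q) * μ[F|ℱ n]) x := by rw [h1, h2]
    _ = g x ^ q * (μ[F|ℱ n]) x := rfl
    _ ≤ g x ^ q * c := mul_le_mul_of_nonneg_left h3 (Real.rpow_nonneg hgx.le _)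
    _ = c * g x ^ q := mul_comm _ _
end

section
/- Let (Ω, F, μ) be a probability space with filtration (F_n) and ω > 0 an integrable weight with ω_n := E(ω | F_n). If there exist 0 < γ, δ < 1 such that E(χ_{{ω ≤ γ ω_n}} | F_n) ≤ δ a.e. for all n, then there exist 0 < α, β < 1 such that for every measurable set A and every n: E(χ_A | F_n) ≤ α a.e. implies E(ω χ_A | F_n)/ω_n ≤ β a.e. -/
open MeasureTheory

theorem stmt8 {Ω : Type*} {m0 : MeasurableSpace Ω} {μ : Measure Ω} [IsProbabilityMeasure μ]
    (ℱ : Filtration ℕ m0)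
    {ω : Ω → ℝ} (hω : Measurable ω) (hpos : ∀ x, 0 < ω x) (hint : Integrable ω μ)
    (hcon : ∃ γ : ℝ, 0 < γ ∧ γ < 1 ∧ ∃ δ : ℝ, 0 < δ ∧ δ < 1 ∧ ∀ n : ℕ,
      ∀ᵐ x ∂μ,
        (μ[Set.indicator {y | ω y ≤ γ * (μ[ω | ℱ n]) y} (fun _ => (1 : ℝ)) | ℱ n]) x ≤ δ) :
    ∃ α : ℝ, 0 < α ∧ α < 1 ∧ ∃ β : ℝ, 0 < β ∧ β < 1 ∧
      ∀ A : Set Ω, MeasurableSet A → ∀ n : ℕ,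
        (∀ᵐ x ∂μ, (μ[A.indicator (fun _ => (1 : ℝ)) | ℱ n]) x ≤ α) →
        (∀ᵐ x ∂μ, (μ[A.indicator ω | ℱ n]) x / (μ[ω | ℱ n]) x ≤ β) := by
  obtain ⟨γ, hγ0, hγ1, δ, hδ0, hδ1, hcon⟩ := hcon
  set α : ℝ := (1 - δ) / 2 with hαdef
  have hα0 : 0 < α := by simp only [hαdef]; linarith
  have hα1 : α < 1 := by simp only [hαdef]; linarith
  refine ⟨α, hα0, hα1, 1 - γ * α, by nlinarith, by nlinarith, ?_⟩
  intro A hA n hαA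
  set W := μ[ω | ℱ n] with hWdef
  have hWsm : StronglyMeasurable[ℱ n] W := stronglyMeasurable_condExp
  have hWsm0 : StronglyMeasurable W := hWsm.mono (ℱ.le n)
  have hWint : Integrable W μ := integrable_condExp
  have hW0 : 0 ≤ᵐ[μ] W :=
    condExp_nonneg (Filter.Eventually.of_forall fun x => (hpos x).le)
  -- W > 0 a.e.
  have hWpos : ∀ᵐ x ∂μ, 0 < W x := by
    set S : Set Ω := {x | W x ≤ 0} with hSdef
    have hSm : MeasurableSet[ℱ n] S := hWsm.measurableSet_le stronglyMeasurable_const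
    have hSm0 : MeasurableSet S := (ℱ.le n) _ hSm
    have hWS : ∫ x in S, W x ∂μ = ∫ x in S, ω x ∂μ := setIntegral_condExp (ℱ.le n) hint hSm
    have hWSle : ∫ x in S, W x ∂μ ≤ 0 :=
      setIntegral_nonpos hSm0 fun x hx => hx
    have hμS : μ S = 0 := by
      by_contra h
      have hpos' : 0 < ∫ x in S, ω x ∂μ := by
        rw [setIntegral_pos_iff_support_of_nonneg_ae
          (Filter.Eventually.of_forall fun x => (hpos x).le) hint.integrableOn]
        have : Function.support ω = Set.univ := by
          ext x; simp [Function.support, (hpos x).ne']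
        rw [this, Set.univ_inter]
        exact lt_of_le_of_ne (zero_le) (Ne.symm h)
      linarith [hWS ▸ hWSle]
    have : ∀ᵐ x ∂μ, x ∉ S := by
      rw [ae_iff]; simpa using hμS
    filter_upwards [this] with x hx
    simpa [hSdef, not_le] using hx
  set B : Set Ω := {y | ω y ≤ γ * W y} with hBdef
  have hBm : MeasurableSet B := measurableSet_le hω (hWsm0.measurable.const_mul γ)
  -- functions
  set h : Ω → ℝ := fun x =>
    Aᶜ.indicator (fun _ => (1 : ℝ)) x - B.indicator (fun _ => (1 : ℝ)) x with hhdef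
  have hh_int : Integrable h μ :=
    ((integrable_const (1 : ℝ)).indicator hA.compl).sub
      ((integrable_const (1 : ℝ)).indicator hBm)
  have hh_bdd : ∀ x, ‖h x‖ ≤ 2 := by
    intro x
    simp only [hhdef, Real.norm_eq_abs]
    have h1 : Aᶜ.indicator (fun _ => (1:ℝ)) x = 0 ∨ Aᶜ.indicator (fun _ => (1:ℝ)) x = 1 := by
      by_cases hx : x ∈ Aᶜ <;> simp [hx]
    have h2 : B.indicator (fun _ => (1:ℝ)) x = 0 ∨ B.indicator (fun _ => (1:ℝ)) x = 1 := by
      by_cases hx : x ∈ B <;> simp [hx]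
    rcases h1 with h1 | h1 <;> rcases h2 with h2 | h2 <;> rw [h1, h2] <;> norm_num
  set f : Ω → ℝ := fun x => γ * W x with hfdef
  have hf_sm : StronglyMeasurable[ℱ n] f := hWsm.const_mul γ
  have hf_int : Integrable f μ := hWint.const_mul γ
  have hfh_int : Integrable (f * h) μ := by
    have := hf_int.bdd_mul hh_int.aestronglyMeasurable (Filter.Eventually.of_forall hh_bdd)
    refine this.congr (Filter.Eventually.of_forall fun x => ?_)
    simp [mul_comm]
  -- pointwise inequality f * h ≤ Aᶜ.indicator ω a.e.
  have hptwise : ∀ᵐ x ∂μ, (f * h) x ≤ Aᶜ.indicator ω x := by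
    filter_upwards [hW0] with x hWx
    rw [Pi.zero_apply] at hWx
    simp only [Pi.mul_apply, hfdef, hhdef]
    by_cases hxB : x ∈ B
    · by_cases hxA : x ∈ Aᶜ <;>
        simp [hxB, hxA, Set.indicator_of_mem, Set.indicator_of_notMem] <;>
        nlinarith [hpos x, hγ0.le]
    · have hωx : γ * W x < ω x := by simpa [hBdef, not_le] using hxB
      by_cases hxA : x ∈ Aᶜ <;>
        simp [hxB, hxA, Set.indicator_of_mem, Set.indicator_of_notMem] <;>
        nlinarith [hpos x, hγ0.le]
  have hAω_int : Integrable (A.indicator ω) μ := hint.indicator hA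
  have hAcω_int : Integrable (Aᶜ.indicator ω) μ := hint.indicator hA.compl
  -- condexp monotonicity
  have hmono : μ[f * h | ℱ n] ≤ᵐ[μ] μ[Aᶜ.indicator ω | ℱ n] :=
    condExp_mono hfh_int hAcω_int hptwise
  -- pull-out
  have hpull : μ[f * h | ℱ n] =ᵐ[μ] f * μ[h | ℱ n] :=
    condExp_mul_of_stronglyMeasurable_left hf_sm hfh_int hh_int
  -- condexp of h
  have hh_ce : μ[h | ℱ n] =ᵐ[μ]
      μ[Aᶜ.indicator (fun _ => (1:ℝ)) | ℱ n] - μ[B.indicator (fun _ => (1:ℝ)) | ℱ n] :=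
    condExp_sub ((integrable_const (1:ℝ)).indicator hA.compl)
      ((integrable_const (1:ℝ)).indicator hBm) _
  -- Aᶜ indicator condexp
  have hAc_eq : Aᶜ.indicator (fun _ => (1:ℝ)) =
      (fun _ => (1:ℝ)) - A.indicator (fun _ => (1:ℝ)) := by
    funext x; by_cases hx : x ∈ A <;> simp [hx]
  have hAc_ce : μ[Aᶜ.indicator (fun _ => (1:ℝ)) | ℱ n] =ᵐ[μ]
      (fun _ => (1:ℝ)) - μ[A.indicator (fun _ => (1:ℝ)) | ℱ n] := by
    rw [hAc_eq]
    refine (condExp_sub (integrable_const _)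
      ((integrable_const (1:ℝ)).indicator hA) _).trans ?_
    have := condExp_const (μ := μ) (ℱ.le n) (1 : ℝ)
    filter_upwards with x
    simp [this]
  -- decomposition of W
  have hdecomp : W =ᵐ[μ] μ[A.indicator ω | ℱ n] + μ[Aᶜ.indicator ω | ℱ n] := by
    have : ω = A.indicator ω + Aᶜ.indicator ω := by
      funext x; by_cases hx : x ∈ A <;> simp [hx]
    calc W = μ[A.indicator ω + Aᶜ.indicator ω | ℱ n] := by rw [hWdef, ← this]
    _ =ᵐ[μ] μ[A.indicator ω | ℱ n] + μ[Aᶜ.indicator ω | ℱ n] :=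
        condExp_add hAω_int hAcω_int _
  -- combine everything
  filter_upwards [hmono, hpull, hh_ce, hAc_ce, hdecomp, hαA, hcon n, hWpos] with x
    h1 h2 h3 h4 h5 h6 h7 h8
  have hhx : α ≤ (μ[h | ℱ n]) x := by
    rw [h3]
    simp only [Pi.sub_apply] at h4 ⊢
    rw [h4]
    simp only [hαdef] at h6 ⊢
    have : (μ[B.indicator (fun _ => (1:ℝ)) | ℱ n]) x ≤ δ := h7
    linarith
  have hkey : γ * W x * α ≤ (μ[Aᶜ.indicator ω | ℱ n]) x := by
    refine le_trans ?_ (h2 ▸ h1)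
    simp only [Pi.mul_apply, hfdef]
    have : 0 ≤ γ * W x := mul_nonneg hγ0.le h8.le
    nlinarith
  have hWx : W x = (μ[A.indicator ω | ℱ n]) x + (μ[Aᶜ.indicator ω | ℱ n]) x := h5
  rw [div_le_iff₀ h8]
  nlinarith
end

section
/- Let (Ω, F, μ) be a probability space with filtration (F_n) and ω > 0 an integrable weight with ω_n := E(ω | F_n). Suppose there exist 0 < α, β < 1 such that for all measurable A and all n, E(χ_A | F_n) ≤ α a.e. implies E(ω χ_A | F_n)/ω_n ≤ β a.e. Then there exist 0 < γ, δ < 1 such that E(χ_{{ω ≤ γ ω_n}} | F_n) ≤ δ a.e. for all n. -/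
open MeasureTheory

theorem stmt9 {Ω : Type*} {m0 : MeasurableSpace Ω} {μ : Measure Ω} [IsProbabilityMeasure μ]
    (ℱ : Filtration ℕ m0)
    {ω : Ω → ℝ} (hω : Measurable ω) (hpos : ∀ x, 0 < ω x) (hint : Integrable ω μ)
    (hM : ∃ α : ℝ, 0 < α ∧ α < 1 ∧ ∃ β : ℝ, 0 < β ∧ β < 1 ∧
      ∀ A : Set Ω, MeasurableSet A → ∀ n : ℕ,
        (∀ᵐ x ∂μ, (μ[A.indicator (fun _ => (1 : ℝ)) | ℱ n]) x ≤ α) →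
        (∀ᵐ x ∂μ, (μ[A.indicator ω | ℱ n]) x / (μ[ω | ℱ n]) x ≤ β)) :
    ∃ γ : ℝ, 0 < γ ∧ γ < 1 ∧ ∃ δ : ℝ, 0 < δ ∧ δ < 1 ∧ ∀ n : ℕ,
      ∀ᵐ x ∂μ,
        (μ[Set.indicator {y | ω y ≤ γ * (μ[ω | ℱ n]) y} (fun _ => (1 : ℝ)) | ℱ n]) x ≤ δ := by
  obtain ⟨α, hα0, hα1, β, hβ0, hβ1, hMain⟩ := hM
  refine ⟨(1 - β) / 2, by linarith, by linarith, 1 - α, by linarith, by linarith, fun n => ?_⟩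
  set γ : ℝ := (1 - β) / 2 with hγdef
  have hγ0 : 0 < γ := by rw [hγdef]; linarith
  have hγβ : β < 1 - γ := by rw [hγdef]; linarith
  set f : Ω → ℝ := μ[ω | ℱ n] with hfdef
  have hf_sm : StronglyMeasurable[ℱ n] f := stronglyMeasurable_condExp
  have hf_meas : Measurable f := (hf_sm.measurable).mono (ℱ.le n) le_rfl
  have hf_int : Integrable f μ := integrable_condExp
  -- f > 0 a.e.
  have hω_nonneg : 0 ≤ᵐ[μ] ω := Filter.Eventually.of_forall fun x => (hpos x).le
  have hf_nonneg : 0 ≤ᵐ[μ] f := condExp_nonneg hω_nonneg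
  have hf_pos : ∀ᵐ x ∂μ, 0 < f x := by
    set s : Set Ω := {x | f x ≤ 0} with hsdef
    have hs_meas : MeasurableSet[ℱ n] s :=
      hf_sm.measurable measurableSet_Iic
    have hs_null : μ s = 0 := by
      by_contra hs
      have hμs : 0 < μ s := pos_iff_ne_zero.mpr hs
      have h1 : ∫ x in s, f x ∂μ = ∫ x in s, ω x ∂μ := setIntegral_condExp (ℱ.le n) hint hs_meas
      have h2 : ∫ x in s, f x ∂μ ≤ 0 := by
        apply setIntegral_nonpos ((ℱ.le n) s hs_meas)
        intro x hx; exact hx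
      have h3 : 0 < ∫ x in s, ω x ∂μ := by
        apply setIntegral_pos_iff_support_of_nonneg_ae
          (Filter.Eventually.of_forall fun x => (hpos x).le) hint.integrableOn |>.mpr
        have : Function.support ω = Set.univ := by
          ext x; simp [Function.support, (hpos x).ne']
        rw [this]
        simpa using hμs
      linarith
    filter_upwards [measure_eq_zero_iff_ae_notMem.mp hs_null] with x hx
    exact lt_of_not_ge hx
  set E : Set Ω := {y | ω y ≤ γ * f y} with hEdef
  have hE_meas : MeasurableSet E := measurableSet_le hω (hf_meas.const_mul γ)
  set g : Ω → ℝ := μ[E.indicator (fun _ => (1 : ℝ)) | ℱ n] with hgdef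
  set B : Set Ω := {x | 1 - α < g x} with hBdef
  have hB_meas : MeasurableSet[ℱ n] B :=
    measurableSet_lt measurable_const stronglyMeasurable_condExp.measurable
  set A : Set Ω := B ∩ Eᶜ with hAdef
  have hA_meas : MeasurableSet A := ((ℱ.le n) B hB_meas).inter hE_meas.compl
  have hind_int : ∀ (C : Set Ω), MeasurableSet C → Integrable (C.indicator (fun _ => (1:ℝ))) μ :=
    fun C hC => (integrable_const (1:ℝ)).indicator hC
  -- indicator rewriting
  have hAind1 : A.indicator (fun _ => (1:ℝ)) = B.indicator (Eᶜ.indicator (fun _ => (1:ℝ))) := by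
    rw [Set.indicator_indicator]
  have hAindω : A.indicator ω = B.indicator (Eᶜ.indicator ω) := by
    rw [Set.indicator_indicator]
  -- condexp of indicator of complement
  have hcompl1 : μ[Eᶜ.indicator (fun _ => (1:ℝ)) | ℱ n] =ᵐ[μ]
      fun x => 1 - g x := by
    have hpt : Eᶜ.indicator (fun _ => (1:ℝ)) =
        (fun _ => (1:ℝ)) - E.indicator (fun _ => (1:ℝ)) := by
      funext x
      by_cases hx : x ∈ E <;> simp [Set.indicator_apply, hx]
    rw [hpt]
    calc μ[(fun _ => (1:ℝ)) - E.indicator (fun _ => (1:ℝ)) | ℱ n]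
        =ᵐ[μ] μ[(fun _ => (1:ℝ)) | ℱ n] - μ[E.indicator (fun _ => (1:ℝ)) | ℱ n] :=
          condExp_sub (integrable_const 1) (hind_int E hE_meas) (ℱ n)
      _ =ᵐ[μ] fun x => 1 - g x := by
          rw [condExp_const (ℱ.le n) (1:ℝ)]
          exact Filter.Eventually.of_forall fun x => rfl
  -- hypothesis check for A
  have hA_cond : ∀ᵐ x ∂μ, (μ[A.indicator (fun _ => (1:ℝ)) | ℱ n]) x ≤ α := by
    have h1 : μ[A.indicator (fun _ => (1:ℝ)) | ℱ n] =ᵐ[μ]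
        B.indicator (μ[Eᶜ.indicator (fun _ => (1:ℝ)) | ℱ n]) := by
      rw [hAind1]
      exact condExp_indicator (hind_int Eᶜ hE_meas.compl) hB_meas
    filter_upwards [h1, hcompl1] with x hx1 hx2
    rw [hx1]
    by_cases hxB : x ∈ B
    · rw [Set.indicator_of_mem hxB, hx2]
      have : 1 - α < g x := hxB
      linarith
    · rw [Set.indicator_of_notMem hxB]; linarith
  have hconc := hMain A hA_meas n hA_cond
  -- bound on μ[E.indicator ω | ℱ n]
  have hEω_int : Integrable (E.indicator ω) μ := hint.indicator hE_meas
  have hγf_int : Integrable (γ • f) μ := hf_int.smul γ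
  have hEω_le : μ[E.indicator ω | ℱ n] ≤ᵐ[μ] fun x => γ * f x := by
    have hmono : μ[E.indicator ω | ℱ n] ≤ᵐ[μ] μ[γ • f | ℱ n] := by
      apply condExp_mono hEω_int hγf_int
      filter_upwards [hf_nonneg] with x hfx
      by_cases hx : x ∈ E
      · rw [Set.indicator_of_mem hx]
        exact hx
      · rw [Set.indicator_of_notMem hx]
        simp only [Pi.smul_apply, smul_eq_mul]
        exact mul_nonneg hγ0.le hfx
    have heq : μ[γ • f | ℱ n] = γ • f :=
      condExp_of_stronglyMeasurable (ℱ.le n) (hf_sm.const_smul γ) hγf_int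
    rw [heq] at hmono
    exact hmono
  -- condexp of Eᶜ.indicator ω
  have hcomplω : μ[Eᶜ.indicator ω | ℱ n] =ᵐ[μ] fun x => f x - (μ[E.indicator ω | ℱ n]) x := by
    have hpt : Eᶜ.indicator ω = ω - E.indicator ω := by
      funext x
      by_cases hx : x ∈ E <;> simp [Set.indicator_apply, hx]
    rw [hpt]
    exact condExp_sub hint hEω_int (ℱ n)
  have hAω : μ[A.indicator ω | ℱ n] =ᵐ[μ] B.indicator (μ[Eᶜ.indicator ω | ℱ n]) := by
    rw [hAindω]
    exact condExp_indicator (hint.indicator hE_meas.compl) hB_meas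
  -- combine everything
  have hBnull : ∀ᵐ x ∂μ, x ∉ B := by
    filter_upwards [hconc, hAω, hcomplω, hEω_le, hf_pos] with x h1 h2 h3 h4 h5
    intro hxB
    rw [h2, Set.indicator_of_mem hxB, h3] at h1
    have hratio : 1 - γ ≤ (f x - (μ[E.indicator ω | ℱ n]) x) / f x := by
      rw [le_div_iff₀ h5]
      nlinarith
    linarith
  filter_upwards [hBnull] with x hx
  exact le_of_not_gt hx
end

section
/- Let (Ω, F, μ) be a probability space with filtration (F_n) and ω > 0 an integrable weight with ω_n := E(ω | F_n). Define a median function m(ω, n): an F_n-measurable function such that E(χ_{{ω > m(ω,n)}} | F_n) ≤ 1/2 and E(χ_{{ω < m(ω,n)}} | F_n) ≤ 1/2 a.e. If ω satisfies A^{SW}_∞ (there is C > 1 with ω_n ≤ C E(ω^s | F_n)^{1/s} a.e. for all s ∈ (0,1) and all n), then there exists C' > 1 with ω_n ≤ C' m(ω, n) a.e. for all n. -/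
open MeasureTheory

theorem condexp_affine' {α : Type*} {m m0 : MeasurableSpace α} {μ : Measure α}
    {f g : α → ℝ} (hf : Integrable f μ) (hg : Integrable g μ) (a b : ℝ) :
    μ[fun x => a * f x + b * g x | m] =ᵐ[μ]
      fun x => a * (μ[f|m]) x + b * (μ[g|m]) x := by
  have h1 : μ[fun x => a * f x | m] =ᵐ[μ] fun x => a * (μ[f|m]) x := by
    simpa [Pi.smul_def, smul_eq_mul] using condExp_smul (m := m) (μ := μ) a f
  have h2 : μ[fun x => b * g x | m] =ᵐ[μ] fun x => b * (μ[g|m]) x := by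
    simpa [Pi.smul_def, smul_eq_mul] using condExp_smul (m := m) (μ := μ) b g
  have h3 := condExp_add (m := m) (hf.const_mul a) (hg.const_mul b)
  filter_upwards [h1, h2, h3] with x e1 e2 e3
  simpa [e1, e2, Pi.add_def] using e3

theorem stmt15 {Ω : Type*} {m0 : MeasurableSpace Ω} {μ : Measure Ω} [IsProbabilityMeasure μ]
    (ℱ : Filtration ℕ m0)
    {ω : Ω → ℝ} (hω : Measurable ω) (hpos : ∀ x, 0 < ω x) (hint : Integrable ω μ)
    (m : ℕ → Ω → ℝ)
    (hmeas : ∀ n, StronglyMeasurable[ℱ n] (m n))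
    (hmed1 : ∀ n, ∀ᵐ x ∂μ,
      (μ[Set.indicator {y | m n y < ω y} (fun _ => (1 : ℝ)) | ℱ n]) x ≤ 1 / 2)
    (hmed2 : ∀ n, ∀ᵐ x ∂μ,
      (μ[Set.indicator {y | ω y < m n y} (fun _ => (1 : ℝ)) | ℱ n]) x ≤ 1 / 2)
    (hSW : ∃ C > 1, ∀ s : ℝ, 0 < s → s < 1 → ∀ n : ℕ,
      ∀ᵐ x ∂μ, (μ[ω | ℱ n]) x ≤ C * ((μ[fun y => ω y ^ s | ℱ n]) x) ^ (1 / s)) :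
    ∃ C' > 1, ∀ n : ℕ, ∀ᵐ x ∂μ, (μ[ω | ℱ n]) x ≤ C' * m n x := by
  obtain ⟨C, hC, hsw⟩ := hSW
  have hC0 : (0:ℝ) < C := lt_trans one_pos hC
  set s : ℝ := 1 / (8 * C) with hs_def
  have hs0 : 0 < s := by positivity
  have hs1 : s < 1 := by
    rw [hs_def, div_lt_one (by positivity)]; nlinarith
  have hsC : s * C = 1 / 8 := by
    rw [hs_def]; field_simp
  have hfour : (1:ℝ) < 4 ^ (1/s) := by
    apply Real.one_lt_rpow_iff_of_pos (by norm_num) |>.2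
    exact Or.inl ⟨by norm_num, by positivity⟩
  refine ⟨C * 4 ^ (1/s), by nlinarith, fun n => ?_⟩
  -- measurability basics
  have hmn : Measurable (m n) := ((hmeas n).measurable).mono (ℱ.le n) le_rfl
  have hS : MeasurableSet {y | m n y < ω y} := measurableSet_lt hmn hω
  have hT : MeasurableSet {y | ω y ≤ m n y} := measurableSet_le hω hmn
  have hωs_meas : Measurable (fun y => ω y ^ s) :=
    (Real.continuous_rpow_const hs0.le).measurable.comp hω
  have hωnn : ∀ x, 0 ≤ ω x := fun x => (hpos x).le
  -- integrability of ω^s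
  have hωs_int : Integrable (fun y => ω y ^ s) μ := by
    refine Integrable.mono' ((integrable_const (1:ℝ)).add hint)
      hωs_meas.aestronglyMeasurable (Filter.Eventually.of_forall fun x => ?_)
    rw [Real.norm_of_nonneg (Real.rpow_nonneg (hωnn x) s)]
    simp only [Pi.add_apply]
    rcases le_total (ω x) 1 with h | h
    · have := Real.rpow_le_one (hωnn x) h hs0.le
      nlinarith [hωnn x]
    · have : ω x ^ s ≤ ω x ^ (1:ℝ) := Real.rpow_le_rpow_of_exponent_le h hs1.le
      rw [Real.rpow_one] at this
      linarith
  set f : Ω → ℝ := Set.indicator {y | m n y < ω y} (fun y => ω y ^ s) with hf_def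
  set g : Ω → ℝ := Set.indicator {y | ω y ≤ m n y} (fun y => ω y ^ s) with hg_def
  set χ : Ω → ℝ := Set.indicator {y | m n y < ω y} (fun _ => (1:ℝ)) with hχ_def
  have hf_int : Integrable f μ := hωs_int.indicator hS
  have hg_int : Integrable g μ := hωs_int.indicator hT
  have hχ_int : Integrable χ μ := (integrable_const (1:ℝ)).indicator hS
  have hfg : f + g = fun y => ω y ^ s := by
    funext x
    by_cases h : m n x < ω x
    · simp [hf_def, hg_def, Set.indicator_of_mem, Set.indicator_of_notMem, h, not_lt.2 h.le]
    · simp [hf_def, hg_def, Set.indicator_of_mem, Set.indicator_of_notMem, h, not_lt.1 h]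
  -- notation for condexps
  set W := μ[ω | ℱ n] with hW_def
  set X := μ[fun y => ω y ^ s | ℱ n] with hX_def
  set Y := μ[f | ℱ n] with hY_def
  set Z := μ[g | ℱ n] with hZ_def
  set E := μ[χ | ℱ n] with hE_def
  have hXYZ : ∀ᵐ x ∂μ, X x = Y x + Z x := by
    have := condExp_add (m := ℱ n) (μ := μ) hf_int hg_int
    rw [hfg] at this
    filter_upwards [this] with x hx using hx
  have hX0 : ∀ᵐ x ∂μ, 0 ≤ X x :=
    condExp_nonneg (Filter.Eventually.of_forall fun x => Real.rpow_nonneg (hωnn x) s)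
  have hY0 : ∀ᵐ x ∂μ, 0 ≤ Y x :=
    condExp_nonneg (Filter.Eventually.of_forall fun x =>
      Set.indicator_nonneg (fun y _ => Real.rpow_nonneg (hωnn y) s) x)
  have hE0 : ∀ᵐ x ∂μ, 0 ≤ E x :=
    condExp_nonneg (Filter.Eventually.of_forall fun x =>
      Set.indicator_nonneg (fun _ _ => zero_le_one) x)
  have hWX : ∀ᵐ x ∂μ, W x ≤ C * X x ^ (1/s) := hsw s hs0 hs1 n
  have hE2 : ∀ᵐ x ∂μ, E x ≤ 1/2 := hmed1 n
  -- positivity of the median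
  have hm_pos : ∀ᵐ x ∂μ, 0 < m n x := by
    set B : Set Ω := {x | m n x ≤ 0} with hB_def
    have hB : MeasurableSet[ℱ n] B := (hmeas n).measurable measurableSet_Iic
    have hBm0 : MeasurableSet B := ℱ.le n B hB
    have hBint : Integrable (B.indicator (fun _ => (1:ℝ))) μ :=
      (integrable_const (1:ℝ)).indicator hBm0
    have hind : μ[B.indicator (fun _ => (1:ℝ)) | ℱ n] = B.indicator (fun _ => (1:ℝ)) :=
      condExp_of_stronglyMeasurable (ℱ.le n)
        (stronglyMeasurable_const.indicator hB) hBint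
    have hle : ∀ x, B.indicator (fun _ => (1:ℝ)) x ≤ χ x := by
      intro x
      by_cases hx : x ∈ B
      · have hx' : x ∈ {y | m n y < ω y} := lt_of_le_of_lt hx (hpos x)
        simp [Set.indicator_of_mem, hx, hx', hχ_def]
      · rw [Set.indicator_of_notMem hx]
        exact Set.indicator_nonneg (fun _ _ => zero_le_one) x
    have hmono := condExp_mono (m := ℱ n) hBint hχ_int (Filter.Eventually.of_forall hle)
    rw [hind] at hmono
    filter_upwards [hmono, hE2] with x h1 h2
    by_contra h
    push_neg at h
    have hxB : x ∈ B := h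
    rw [Set.indicator_of_mem hxB] at h1
    linarith
  -- Z ≤ m⁺ ^ s
  have hZm : ∀ᵐ x ∂μ, Z x ≤ max (m n x) 0 ^ s := by
    have key : ∀ k : ℕ, ∀ᵐ x ∂μ, m n x ≤ (k:ℝ) → Z x ≤ max (m n x) 0 ^ s := by
      intro k
      set A : Set Ω := {x | m n x ≤ (k:ℝ)} with hA_def
      have hA : MeasurableSet[ℱ n] A := (hmeas n).measurable measurableSet_Iic
      have hAm0 : MeasurableSet A := ℱ.le n A hA
      set h : Ω → ℝ := fun x => min (max (m n x) 0) (k:ℝ) ^ s with hh_def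
      have hbase : Measurable[ℱ n] (fun x => min (max (m n x) 0) (k:ℝ)) :=
        ((hmeas n).measurable.max measurable_const).min measurable_const
      have hh_meas : StronglyMeasurable[ℱ n] h :=
        ((Real.continuous_rpow_const hs0.le).measurable.comp hbase).stronglyMeasurable
      have hh_int : Integrable h μ := by
        refine Integrable.mono' (integrable_const ((k:ℝ)^s))
          ((hh_meas.mono (ℱ.le n)).aestronglyMeasurable)
          (Filter.Eventually.of_forall fun x => ?_)
        have h0 : 0 ≤ min (max (m n x) 0) (k:ℝ) := le_min (le_max_right _ _) (Nat.cast_nonneg k)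
        rw [Real.norm_of_nonneg (Real.rpow_nonneg h0 s)]
        exact Real.rpow_le_rpow h0 (min_le_right _ _) hs0.le
      have h1 : μ[A.indicator g|ℱ n] =ᵐ[μ] A.indicator Z := condExp_indicator hg_int hA
      have h2 : ∀ x, A.indicator g x ≤ h x := by
        intro x
        have h0 : 0 ≤ min (max (m n x) 0) (k:ℝ) := le_min (le_max_right _ _) (Nat.cast_nonneg k)
        by_cases hxA : x ∈ A
        · rw [Set.indicator_of_mem hxA]
          by_cases hxT : x ∈ {y | ω y ≤ m n y}
          · rw [hg_def, Set.indicator_of_mem hxT]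
            have hxT' : ω x ≤ m n x := hxT
            have hxA' : m n x ≤ (k:ℝ) := hxA
            have hmin : ω x ≤ min (max (m n x) 0) (k:ℝ) :=
              le_min (le_max_of_le_left hxT') (hxT'.trans hxA')
            exact Real.rpow_le_rpow (hωnn x) hmin hs0.le
          · rw [hg_def, Set.indicator_of_notMem hxT]
            exact Real.rpow_nonneg h0 s
        · rw [Set.indicator_of_notMem hxA]
          exact Real.rpow_nonneg h0 s
      have h3 := condExp_mono (m := ℱ n) (hg_int.indicator hAm0) hh_int
        (Filter.Eventually.of_forall h2)
      have h4 : μ[h|ℱ n] = h := condExp_of_stronglyMeasurable (ℱ.le n) hh_meas hh_int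
      rw [h4] at h3
      filter_upwards [h1, h3] with x e1 e3 hxk
      have hxA : x ∈ A := hxk
      have hstep : Z x ≤ h x := by
        have : A.indicator Z x = Z x := Set.indicator_of_mem hxA _
        rw [← this, ← e1]
        exact e3
      refine hstep.trans ?_
      exact Real.rpow_le_rpow (le_min (le_max_right _ _) (Nat.cast_nonneg k))
        (min_le_left _ _) hs0.le
    have hall := (ae_all_iff).2 key
    filter_upwards [hall] with x hx
    exact hx ⌈m n x⌉₊ (Nat.le_ceil _)
  -- Young's inequality bound for every positive rational
  have hYoung : ∀ᵐ x ∂μ, ∀ q : ℚ, 0 < q →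
      Y x ≤ s * (q:ℝ) ^ (1/s) * W x + (1-s) * (q:ℝ) ^ (-(1/(1-s))) * E x := by
    rw [ae_all_iff]
    intro q
    by_cases hq : 0 < q
    swap
    · exact Filter.Eventually.of_forall fun x h => absurd h hq
    have ht0 : (0:ℝ) < (q:ℝ) := by exact_mod_cast hq
    have h1s : (0:ℝ) < 1 - s := by linarith
    have hpq : (1/s).HolderConjugate (1/(1-s)) := by
      constructor
      · rw [one_div, one_div, inv_inv, inv_inv, inv_one]; ring
      · exact one_div_pos.2 hs0
      · exact one_div_pos.2 h1s
    have hpt : ∀ x, f x ≤ s * (q:ℝ)^(1/s) * ω x + (1-s) * (q:ℝ)^(-(1/(1-s))) * χ x := by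
      intro x
      by_cases hx : x ∈ {y | m n y < ω y}
      · rw [hf_def, Set.indicator_of_mem hx, hχ_def, Set.indicator_of_mem hx, mul_one]
        have hy := Real.young_inequality_of_nonneg
          (mul_nonneg ht0.le (Real.rpow_nonneg (hωnn x) s)) (inv_nonneg.2 ht0.le) hpq
        have heq1 : ((q:ℝ) * ω x ^ s) * (q:ℝ)⁻¹ = ω x ^ s := by field_simp
        have heq2 : ((q:ℝ) * ω x ^ s) ^ (1/s) / (1/s) + ((q:ℝ)⁻¹) ^ (1/(1-s)) / (1/(1-s))
            = s * (q:ℝ)^(1/s) * ω x + (1-s) * (q:ℝ)^(-(1/(1-s))) := by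
          rw [Real.mul_rpow ht0.le (Real.rpow_nonneg (hωnn x) s),
            ← Real.rpow_mul (hωnn x),
            mul_one_div_cancel hs0.ne', Real.rpow_one,
            Real.inv_rpow ht0.le, ← Real.rpow_neg ht0.le]
          have e1 := hs0.ne'
          have e2 := h1s.ne'
          field_simp
        rw [heq1, heq2] at hy
        exact hy
      · rw [hf_def, Set.indicator_of_notMem hx, hχ_def, Set.indicator_of_notMem hx, mul_zero,
          add_zero]
        have := Real.rpow_nonneg ht0.le (1/s)
        have := hωnn x
        positivity
    have hrhs_int : Integrable
        (fun x => s * (q:ℝ)^(1/s) * ω x + (1-s) * (q:ℝ)^(-(1/(1-s))) * χ x) μ :=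
      (hint.const_mul _).add (hχ_int.const_mul _)
    have h3 := condExp_mono (m := ℱ n) hf_int hrhs_int (Filter.Eventually.of_forall hpt)
    have h4 := condexp_affine' (m := ℱ n) hint hχ_int (s * (q:ℝ)^(1/s))
      ((1-s) * (q:ℝ)^(-(1/(1-s))))
    filter_upwards [h3, h4] with x e3 e4 _
    exact le_of_le_of_eq e3 e4
  -- combine everything pointwise
  filter_upwards [hXYZ, hX0, hY0, hE0, hWX, hE2, hm_pos, hZm, hYoung] with x
    hXYZ hX0 hY0 hE0 hWX hE2 hm_pos hZm hYoung
  clear hW_def hX_def hY_def hZ_def hE_def hfg hf_int hg_int hχ_int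
  clear_value W X Y Z E
  have hmax : max (m n x) 0 = m n x := max_eq_left hm_pos.le
  rw [hmax] at hZm
  rcases eq_or_lt_of_le hX0 with hXeq | hXpos
  · rw [← hXeq, Real.zero_rpow (ne_of_gt (by positivity : (0:ℝ) < 1/s)), mul_zero] at hWX
    have h4pos : (0:ℝ) < 4 ^ (1/s) := by positivity
    have := mul_pos (mul_pos hC0 h4pos) hm_pos
    linarith
  · set t' : ℝ := X x ^ (s-1) with ht'
    have ht'0 : 0 < t' := Real.rpow_pos_of_pos hXpos _
    have h2s : (1:ℝ) < 2 ^ s :=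
      (Real.one_lt_rpow_iff_of_pos (by norm_num)).2 (Or.inl ⟨one_lt_two, hs0⟩)
    obtain ⟨q, hq1, hq2⟩ := exists_rat_btwn (show t' < 2^s * t' by nlinarith)
    have hq0r : (0:ℝ) < (q:ℝ) := ht'0.trans hq1
    have hq0 : 0 < q := by exact_mod_cast hq0r
    have hYq := hYoung q hq0
    have h1s : (0:ℝ) < 1 - s := by linarith
    have e1 : (q:ℝ)^(1/s) ≤ 2 * X x ^ ((s-1)/s) := by
      have hle : (q:ℝ)^(1/s) ≤ (2^s * t')^(1/s) :=
        Real.rpow_le_rpow hq0r.le hq2.le (by positivity)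
      have heq : (2^s * t')^(1/s) = 2 * X x ^ ((s-1)/s) := by
        rw [Real.mul_rpow (by positivity) ht'0.le, ht', ← Real.rpow_mul (by norm_num : (0:ℝ) ≤ 2),
          mul_one_div_cancel hs0.ne', Real.rpow_one, ← Real.rpow_mul hXpos.le, mul_one_div]
      rw [heq] at hle
      exact hle
    have e2 : (q:ℝ)^(-(1/(1-s))) ≤ X x := by
      have h := Real.rpow_le_rpow_of_nonpos ht'0 hq1.le
        (by rw [neg_nonpos]; positivity : -(1/(1-s)) ≤ 0)
      have heq : t'^(-(1/(1-s))) = X x := by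
        rw [ht', ← Real.rpow_mul hXpos.le]
        have : (s-1) * (-(1/(1-s))) = 1 := by field_simp; ring
        rw [this, Real.rpow_one]
      rw [heq] at h
      exact h
    have hXs : X x ^ ((s-1)/s) * X x ^ (1/s) = X x := by
      rw [← Real.rpow_add hXpos]
      have : (s-1)/s + 1/s = 1 := by field_simp; ring
      rw [this, Real.rpow_one]
    have hterm1 : s * (q:ℝ)^(1/s) * W x ≤ (1/4) * X x := by
      have hX1s : (0:ℝ) ≤ X x ^ (1/s) := Real.rpow_nonneg hXpos.le _
      calc s * (q:ℝ)^(1/s) * W x ≤ s * (q:ℝ)^(1/s) * (C * X x ^ (1/s)) := by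
            apply mul_le_mul_of_nonneg_left hWX
              (mul_nonneg hs0.le (Real.rpow_nonneg hq0r.le _))
        _ ≤ s * (2 * X x ^ ((s-1)/s)) * (C * X x ^ (1/s)) := by
            apply mul_le_mul_of_nonneg_right (mul_le_mul_of_nonneg_left e1 hs0.le)
              (mul_nonneg hC0.le hX1s)
        _ = 2 * (s * C) * (X x ^ ((s-1)/s) * X x ^ (1/s)) := by ring
        _ = (1/4) * X x := by rw [hXs, hsC]; ring
    have hterm2 : (1-s) * (q:ℝ)^(-(1/(1-s))) * E x ≤ (1/2) * X x := by
      have hqe : (0:ℝ) ≤ (q:ℝ)^(-(1/(1-s))) := Real.rpow_nonneg hq0r.le _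
      calc (1-s) * (q:ℝ)^(-(1/(1-s))) * E x ≤ (1-s) * (q:ℝ)^(-(1/(1-s))) * (1/2) := by
            apply mul_le_mul_of_nonneg_left hE2 (mul_nonneg (by linarith) hqe)
        _ ≤ (1-s) * X x * (1/2) := by
            apply mul_le_mul_of_nonneg_right
              (mul_le_mul_of_nonneg_left e2 (by linarith)) (by norm_num)
        _ ≤ (1/2) * X x := by nlinarith [mul_nonneg hs0.le hXpos.le]
    have hY34 : Y x ≤ (3/4) * X x := by linarith
    have hXm : X x ≤ 4 * m n x ^ s := by linarith
    have hXs4 : X x ^ (1/s) ≤ 4^(1/s) * m n x := by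
      have hh1 : X x ^ (1/s) ≤ (4 * m n x ^ s)^(1/s) :=
        Real.rpow_le_rpow hXpos.le hXm (le_of_lt (by positivity))
      rw [Real.mul_rpow (by norm_num) (Real.rpow_nonneg hm_pos.le s),
        ← Real.rpow_mul hm_pos.le, mul_one_div_cancel hs0.ne', Real.rpow_one] at hh1
      exact hh1
    calc W x ≤ C * X x ^ (1/s) := hWX
      _ ≤ C * (4^(1/s) * m n x) := mul_le_mul_of_nonneg_left hXs4 hC0.le
      _ = C * 4^(1/s) * m n x := by ring
end

section
/- Let (Ω, F, μ) be a probability space with filtration (F_n), ω > 0 integrable with ω_n := E(ω | F_n), and m(ω,n) an F_n-measurable median function of ω relative to F_n. If there exists C > 1 with ω_n ≤ C m(ω,n) a.e. for all n, then for all measurable A and all n: E(χ_A | F_n) < 1/4 a.e. implies E(ω χ_A | F_n)/ω_n ≤ 1 − 1/(4C) a.e. -/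
open MeasureTheory

theorem stmt16 {Ω : Type*} {m0 : MeasurableSpace Ω} {μ : Measure Ω} [IsProbabilityMeasure μ]
    (ℱ : Filtration ℕ m0)
    {ω : Ω → ℝ} (hω : Measurable ω) (hpos : ∀ x, 0 < ω x) (hint : Integrable ω μ)
    (m : ℕ → Ω → ℝ)
    (hmeas : ∀ n, StronglyMeasurable[ℱ n] (m n))
    (hmed1 : ∀ n, ∀ᵐ x ∂μ,
      (μ[Set.indicator {y | m n y < ω y} (fun _ => (1 : ℝ)) | ℱ n]) x ≤ 1 / 2)
    (hmed2 : ∀ n, ∀ᵐ x ∂μ,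
      (μ[Set.indicator {y | ω y < m n y} (fun _ => (1 : ℝ)) | ℱ n]) x ≤ 1 / 2)
    {C : ℝ} (hC : 1 < C)
    (hmed : ∀ n : ℕ, ∀ᵐ x ∂μ, (μ[ω | ℱ n]) x ≤ C * m n x) :
    ∀ A : Set Ω, MeasurableSet A → ∀ n : ℕ,
      (∀ᵐ x ∂μ, (μ[A.indicator (fun _ => (1 : ℝ)) | ℱ n]) x < 1 / 4) →
      (∀ᵐ x ∂μ, (μ[A.indicator ω | ℱ n]) x / (μ[ω | ℱ n]) x ≤ 1 - 1 / (4 * C)) := by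
  intro A hA n hA4
  have hle : ℱ n ≤ m0 := ℱ.le n
  have hC0 : (0:ℝ) < C := lt_trans one_pos hC
  set ωn := μ[ω | ℱ n] with hωn_def
  -- ωn > 0 a.e.
  have hωn_pos : ∀ᵐ x ∂μ, 0 < ωn x := by
    have hB : MeasurableSet[ℱ n] {x | ωn x ≤ 0} :=
      (stronglyMeasurable_condExp (μ := μ) (f := ω) (m := ℱ n)).measurable measurableSet_Iic
    have hBs : MeasurableSet {x | ωn x ≤ 0} := hle _ hB
    have h0 : μ {x | ωn x ≤ 0} = 0 := by
      by_contra h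
      have h1 : ∫ x in {x | ωn x ≤ 0}, ωn x ∂μ = ∫ x in {x | ωn x ≤ 0}, ω x ∂μ :=
        setIntegral_condExp hle hint hB
      have h2 : 0 < ∫ x in {x | ωn x ≤ 0}, ω x ∂μ := by
        rw [setIntegral_pos_iff_support_of_nonneg_ae
          (Filter.Eventually.of_forall fun x => (hpos x).le) hint.integrableOn]
        have hsup : Function.support ω = Set.univ := by
          ext x; simp [Function.support, (hpos x).ne']
        rw [hsup, Set.univ_inter]
        exact lt_of_le_of_ne (zero_le) (Ne.symm h)
      have h3 : ∫ x in {x | ωn x ≤ 0}, ωn x ∂μ ≤ 0 :=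
        setIntegral_nonpos hBs fun x hx => hx
      rw [h1] at h3
      exact absurd h2 (not_lt.mpr h3)
    rw [ae_iff]
    simpa [not_lt] using h0
  -- sets and functions
  set S : Set Ω := {x | m n x ≤ ω x} with hS_def
  set T : Set Ω := {y | ω y < m n y} with hT_def
  have hmn_meas : Measurable (m n) := ((hmeas n).mono hle).measurable
  have hS : MeasurableSet S := measurableSet_le hmn_meas hω
  set fA : Ω → ℝ := A.indicator (fun _ => (1:ℝ)) with hfA_def
  set fT : Ω → ℝ := T.indicator (fun _ => (1:ℝ)) with hfT_def
  set g : Ω → ℝ := (Aᶜ ∩ S).indicator (fun _ => (1:ℝ)) with hg_def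
  set m' : Ω → ℝ := fun x => max (m n x) 0 with hm'_def
  have hm'_sm : StronglyMeasurable[ℱ n] m' := ((hmeas n).measurable.max measurable_const).stronglyMeasurable
  have hfA_int : Integrable fA μ := (integrable_const 1).indicator hA
  have hfT_int : Integrable fT μ := (integrable_const 1).indicator (measurableSet_lt hω hmn_meas)
  have hg_int : Integrable g μ := (integrable_const 1).indicator (hA.compl.inter hS)
  -- the product function
  have hmg_bound : ∀ x, m' x * g x ≤ Aᶜ.indicator ω x ∧ 0 ≤ m' x * g x := by
    intro x
    rw [hg_def, hm'_def]
    by_cases hxA : x ∈ A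
    · have h1 : x ∉ Aᶜ ∩ S := fun h => h.1 hxA
      have h2 : x ∉ Aᶜ := fun h => h hxA
      simp [Set.indicator_of_notMem h1, Set.indicator_of_notMem h2]
    · by_cases hxS : x ∈ S
      · have h1 : x ∈ Aᶜ ∩ S := ⟨hxA, hxS⟩
        have h2 : x ∈ Aᶜ := hxA
        constructor
        · rw [Set.indicator_of_mem h1, Set.indicator_of_mem h2, mul_one]
          exact max_le hxS (hpos x).le
        · rw [Set.indicator_of_mem h1, mul_one]
          exact le_max_right _ _
      · have h1 : x ∉ Aᶜ ∩ S := fun h => hxS h.2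
        have h2 : x ∈ Aᶜ := hxA
        simp [Set.indicator_of_notMem h1, Set.indicator_of_mem h2, (hpos x).le]
  have hmg_int : Integrable (fun x => m' x * g x) μ := by
    refine hint.mono (((hm'_sm.mono hle).mul
      (stronglyMeasurable_const.indicator (hA.compl.inter hS))).aestronglyMeasurable)
      (Filter.Eventually.of_forall fun x => ?_)
    rw [Real.norm_eq_abs, Real.norm_eq_abs, abs_of_nonneg (hmg_bound x).2,
      abs_of_nonneg (hpos x).le]
    exact le_trans (hmg_bound x).1 (Set.indicator_le_self' (fun y _ => (hpos y).le) x)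
  -- step: μ[g | ℱ n] ≥ 1/4 a.e.
  have hptw : ((fun _ => (1:ℝ)) - fT - fA) ≤ g := by
    intro x
    simp only [Pi.sub_apply]
    rw [hfT_def, hfA_def, hg_def]
    have hTnn : (0:ℝ) ≤ T.indicator (fun _ => (1:ℝ)) x :=
      Set.indicator_nonneg (fun _ _ => zero_le_one) x
    by_cases hxA : x ∈ A
    · have h2 : x ∉ Aᶜ ∩ S := fun h => h.1 hxA
      rw [Set.indicator_of_mem hxA, Set.indicator_of_notMem h2]
      linarith
    · by_cases hxS : x ∈ S
      · have hmem : x ∈ Aᶜ ∩ S := ⟨hxA, hxS⟩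
        rw [Set.indicator_of_mem hmem, Set.indicator_of_notMem hxA]
        linarith
      · have hxS' : ¬ m n x ≤ ω x := hxS
        have hxT : x ∈ T := lt_of_not_ge hxS'
        have h2 : x ∉ Aᶜ ∩ S := fun h => hxS h.2
        rw [Set.indicator_of_mem hxT, Set.indicator_of_notMem hxA,
          Set.indicator_of_notMem h2]
        norm_num
  have hlhs_int : Integrable ((fun _ => (1:ℝ)) - fT - fA) μ :=
    ((integrable_const 1).sub hfT_int).sub hfA_int
  have hmono1 := condExp_mono (μ := μ) (m := ℱ n) hlhs_int hg_int
    (Filter.Eventually.of_forall hptw)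
  have hsub1 : μ[(fun _ => (1:ℝ)) - fT - fA | ℱ n] =ᵐ[μ]
      μ[(fun _ => (1:ℝ)) - fT | ℱ n] - μ[fA | ℱ n] :=
    condExp_sub ((integrable_const 1).sub hfT_int) hfA_int (ℱ n)
  have hsub2 : μ[(fun _ => (1:ℝ)) - fT | ℱ n] =ᵐ[μ]
      μ[(fun _ => (1:ℝ)) | ℱ n] - μ[fT | ℱ n] :=
    condExp_sub (integrable_const 1) hfT_int (ℱ n)
  have hconst : μ[(fun _ => (1:ℝ)) | ℱ n] = fun _ => (1:ℝ) := condExp_const hle 1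
  have hg14 : ∀ᵐ x ∂μ, (1:ℝ)/4 ≤ (μ[g | ℱ n]) x := by
    filter_upwards [hmono1, hsub1, hsub2, hmed2 n, hA4] with x h1 h2 h3 h4 h5
    have h1' : (μ[(fun _ => (1:ℝ)) - fT - fA | ℱ n]) x ≤ (μ[g | ℱ n]) x := h1
    rw [h2] at h1'
    simp only [Pi.sub_apply] at h1'
    rw [h3] at h1'
    simp only [Pi.sub_apply, hconst] at h1'
    have h4' : (μ[fT | ℱ n]) x ≤ 1/2 := h4
    have h5' : (μ[fA | ℱ n]) x < 1/4 := h5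
    linarith
  -- pull out m'
  have hpull : μ[fun x => m' x * g x | ℱ n] =ᵐ[μ] fun x => m' x * (μ[g | ℱ n]) x :=
    condExp_mul_of_stronglyMeasurable_left hm'_sm hmg_int hg_int
  -- monotonicity to indicator of complement
  have hAc_int : Integrable (Aᶜ.indicator ω) μ := hint.indicator hA.compl
  have hmono2 := condExp_mono (μ := μ) (m := ℱ n) hmg_int hAc_int
    (Filter.Eventually.of_forall fun x => (hmg_bound x).1)
  -- split ω into A and Aᶜ parts
  have hind : A.indicator ω + Aᶜ.indicator ω = ω := Set.indicator_self_add_compl A ω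
  have hadd : μ[A.indicator ω + Aᶜ.indicator ω | ℱ n] =ᵐ[μ]
      μ[A.indicator ω | ℱ n] + μ[Aᶜ.indicator ω | ℱ n] :=
    condExp_add (hint.indicator hA) hAc_int (ℱ n)
  have hsplit : μ[A.indicator ω | ℱ n] + μ[Aᶜ.indicator ω | ℱ n] =ᵐ[μ] ωn := by
    refine hadd.symm.trans ?_
    rw [hind]
  -- combine everything
  filter_upwards [hωn_pos, hg14, hpull, hmono2, hsplit, hmed n] with x hx0 hx14 hxpull hxm2
    hxsp hxmed
  have hm'0 : 0 ≤ m' x := le_max_right _ _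
  have hm'ge : ωn x ≤ C * m' x := le_trans hxmed (by
    have := le_max_left (m n x) 0
    nlinarith)
  have h1 : m' x * (1/4) ≤ m' x * (μ[g | ℱ n]) x := mul_le_mul_of_nonneg_left hx14 hm'0
  have h2 : m' x * (μ[g | ℱ n]) x ≤ (μ[Aᶜ.indicator ω | ℱ n]) x := by
    have := hxm2
    rw [hxpull] at this
    exact this
  have h3 : ωn x / (4 * C) ≤ m' x * (1/4) := by
    rw [div_le_iff₀ (by positivity)]
    nlinarith
  have h4 : (μ[A.indicator ω | ℱ n]) x = ωn x - (μ[Aᶜ.indicator ω | ℱ n]) x := by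
    have hx := hxsp
    simp only [Pi.add_apply] at hx
    linarith
  rw [h4, div_le_iff₀ hx0]
  have h5 : ωn x / (4 * C) ≤ (μ[Aᶜ.indicator ω | ℱ n]) x := le_trans h3 (le_trans h1 h2)
  have h6 : ωn x / (4 * C) = ωn x * (1 / (4 * C)) := by ring
  rw [h6] at h5
  nlinarith
end

section
/- Let (Ω, F, μ) be a probability space with filtration (F_n), and f ∈ L¹(μ). Define the tailed maximal operator M*_n(f) = sup_{m ≥ n} |E(f | F_m)|. Then for every λ > 0, every n, and every B ∈ F_n, one has μ(B ∩ {M*_n(f) > λ}) ≤ (2/λ) ∫_{B ∩ {|f| > λ/2}} |f| dμ. -/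
open MeasureTheory

theorem stmt17 {Ω : Type*} {m0 : MeasurableSpace Ω} {μ : Measure Ω} [IsProbabilityMeasure μ]
    (ℱ : Filtration ℕ m0)
    {f : Ω → ℝ} (hf : Integrable f μ)
    (n : ℕ) {B : Set Ω} (hB : MeasurableSet[ℱ n] B)
    {lam : ℝ} (hlam : 0 < lam) :
    μ (B ∩ {x | lam < ⨆ m : {m : ℕ // n ≤ m}, |(μ[f | ℱ (m : ℕ)]) x|}) ≤
      ENNReal.ofReal ((2 / lam) * ∫ x in B ∩ {x | lam / 2 < |f x|}, |f x| ∂μ) := by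
  classical
  haveI : Nonempty {m : ℕ // n ≤ m} := ⟨⟨n, le_rfl⟩⟩
  obtain ⟨f', hf'm, hff'⟩ := hf.1
  have hf'int : Integrable f' μ := hf.congr hff'
  have hBm : MeasurableSet B := ℱ.le n B hB
  set S : Set Ω := B ∩ {x | lam / 2 < |f' x|} with hS_def
  have hSm : MeasurableSet S :=
    hBm.inter (measurableSet_lt measurable_const hf'm.measurable.abs)
  have hSB : S ⊆ B := Set.inter_subset_left
  set g : Ω → ℝ := S.indicator f' with hg_def
  set h : Ω → ℝ := (B \ S).indicator f' with hh_def
  have hgi : Integrable g μ := hf'int.indicator hSm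
  have hhi : Integrable h μ := hf'int.indicator (hBm.diff hSm)
  have hgh : ∀ x, B.indicator f' x = g x + h x := by
    intro x
    by_cases hxB : x ∈ B
    · by_cases hxS : x ∈ S
      · simp [hg_def, hh_def, Set.indicator_of_mem hxB, Set.indicator_of_mem hxS,
          Set.indicator_of_notMem (fun hx : x ∈ B \ S => hx.2 hxS)]
      · simp [hg_def, hh_def, Set.indicator_of_mem hxB, Set.indicator_of_notMem hxS,
          Set.indicator_of_mem (Set.mem_diff_of_mem hxB hxS)]
    · simp [hg_def, hh_def, Set.indicator_of_notMem hxB,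
        Set.indicator_of_notMem (fun hx : x ∈ S => hxB (hSB hx)),
        Set.indicator_of_notMem (fun hx : x ∈ B \ S => hxB hx.1)]
  have hh_bdd : ∀ x, |h x| ≤ lam / 2 := by
    intro x
    by_cases hx : x ∈ B \ S
    · rw [hh_def, Set.indicator_of_mem hx]
      have : ¬ (lam / 2 < |f' x|) := fun hc => hx.2 ⟨hx.1, hc⟩
      linarith [not_lt.1 this]
    · rw [hh_def, Set.indicator_of_notMem hx, abs_zero]; linarith
  -- the shifted filtration
  set 𝒢 : Filtration ℕ m0 :=
    { seq := fun k => ℱ (n + k)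
      mono' := fun i j hij => ℱ.mono (Nat.add_le_add_left hij n)
      le' := fun k => ℱ.le _ } with h𝒢_def
  have hmart : Martingale (fun k => μ[g | 𝒢 k]) 𝒢 μ := martingale_condExp g 𝒢 μ
  have hsub : Submartingale (fun k ω => |(μ[g | ℱ (n + k)]) ω|) 𝒢 μ := by
    have hsup := hmart.submartingale.sup hmart.neg.submartingale
    have : ((fun k => μ[g | 𝒢 k]) ⊔ (-fun k => μ[g | 𝒢 k]))
        = fun k ω => |(μ[g | ℱ (n + k)]) ω| := by
      funext k ω
      simp only [Pi.sup_apply, Pi.neg_apply]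
      rw [abs_eq_max_neg]
    rwa [this] at hsup
  set ε : NNReal := ⟨lam / 2, by linarith⟩ with hε_def
  have hεR : (ε : ℝ) = lam / 2 := rfl
  set J : ℝ := ∫ x, |g x| ∂μ with hJ_def
  have hJ0 : 0 ≤ J := integral_nonneg fun x => abs_nonneg _
  set Sn : ℕ → Set Ω := fun N => {ω | (ε : ℝ) ≤
      (Finset.range (N + 1)).sup' Finset.nonempty_range_add_one
        fun k => |(μ[g | ℱ (n + k)]) ω|} with hSn_def
  have doob : ∀ N, (ε : ENNReal) * μ (Sn N) ≤ ENNReal.ofReal J := by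
    intro N
    have h1 := maximal_ineq hsub (fun k ω => abs_nonneg _) (ε := ε) N
    refine h1.trans (ENNReal.ofReal_le_ofReal ?_)
    calc ∫ ω in Sn N, |(μ[g | ℱ (n + N)]) ω| ∂μ
        ≤ ∫ ω, |(μ[g | ℱ (n + N)]) ω| ∂μ :=
          setIntegral_le_integral integrable_condExp.abs
            (Filter.Eventually.of_forall fun ω => abs_nonneg _)
      _ ≤ ∫ ω, |g ω| ∂μ := integral_abs_condExp_le g
  -- a.e. pointwise bound
  have hcond : ∀ᵐ x ∂μ, ∀ m, n ≤ m → x ∈ B →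
      |(μ[f | ℱ m]) x| ≤ |(μ[g | ℱ m]) x| + lam / 2 := by
    rw [ae_all_iff]
    intro m
    by_cases hm : n ≤ m
    swap
    · filter_upwards with x hm' using absurd hm' hm
    have e1 := condExp_indicator hf (ℱ.mono hm B hB)
    have e2 : B.indicator f =ᵐ[μ] g + h := by
      filter_upwards [hff'] with x hx
      show B.indicator f x = g x + h x
      rw [← hgh x]
      by_cases hxB : x ∈ B <;> simp [Set.indicator_apply, hxB, hx]
    have e3 : μ[B.indicator f | ℱ m] =ᵐ[μ] μ[g | ℱ m] + μ[h | ℱ m] :=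
      (condExp_congr_ae e2).trans (condExp_add hgi hhi _)
    have e4 : ∀ᵐ x ∂μ, |(μ[h | ℱ m]) x| ≤ (ε : ℝ) :=
      ae_bdd_condExp_of_ae_bdd (Filter.Eventually.of_forall fun x =>
        (hh_bdd x).trans_eq hεR.symm)
    filter_upwards [e1, e3, e4] with x h1 h3 h4 hm' hxB
    rw [Set.indicator_of_mem hxB] at h1
    have hx_eq : (μ[f | ℱ m]) x = (μ[g | ℱ m]) x + (μ[h | ℱ m]) x := by
      rw [← h1, h3, Pi.add_apply]
    rw [hx_eq]
    calc |(μ[g | ℱ m]) x + (μ[h | ℱ m]) x|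
        ≤ |(μ[g | ℱ m]) x| + |(μ[h | ℱ m]) x| := abs_add_le _ _
      _ ≤ |(μ[g | ℱ m]) x| + lam / 2 := by
          have := h4; rw [hεR] at this; linarith
  -- a.e. inclusion into the union
  have key : ∀ᵐ x ∂μ,
      x ∈ B ∩ {x | lam < ⨆ m : {m : ℕ // n ≤ m}, |(μ[f | ℱ (m : ℕ)]) x|} →
      x ∈ ⋃ N, Sn N := by
    filter_upwards [hcond] with x hx hxA
    obtain ⟨hxB, hxT⟩ := hxA
    have hxT' : lam < ⨆ m : {m : ℕ // n ≤ m}, |(μ[f | ℱ (m : ℕ)]) x| := hxT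
    have hex : ∃ m : {m : ℕ // n ≤ m}, lam < |(μ[f | ℱ (m : ℕ)]) x| := by
      by_cases hbdd : BddAbove (Set.range fun m : {m : ℕ // n ≤ m} =>
          |(μ[f | ℱ (m : ℕ)]) x|)
      · exact (lt_ciSup_iff hbdd).mp hxT'
      · rw [Real.iSup_of_not_bddAbove hbdd] at hxT'; linarith
    obtain ⟨⟨m, hm⟩, hlt⟩ := hex
    have hbound := hx m hm hxB
    have hg' : lam / 2 < |(μ[g | ℱ m]) x| := by
      simp only at hlt hbound; linarith
    refine Set.mem_iUnion.2 ⟨m - n, ?_⟩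
    show (ε : ℝ) ≤ _
    refine le_trans ?_ (Finset.le_sup'
      (fun k => |(μ[g | ℱ (n + k)]) x|) (Finset.mem_range.2 (Nat.lt_succ_self (m - n))))
    rw [Nat.add_sub_cancel' hm, hεR]
    linarith
  -- measure computation
  have hSnMeas : ∀ N, MeasurableSet (Sn N) := by
    intro N
    exact measurableSet_le measurable_const
      (Finset.measurable_range_sup'' fun k _ =>
        (stronglyMeasurable_condExp.mono (ℱ.le (n + k))).measurable.abs)
  have hSnMono : Monotone Sn := by
    intro i j hij x hx
    simp only [hSn_def, Set.mem_setOf_eq] at hx ⊢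
    exact le_trans hx (Finset.sup'_mono _
      (Finset.range_subset_range.2 (by omega)) Finset.nonempty_range_add_one)
  have hεne : (ε : ENNReal) ≠ 0 := by
    simp only [ne_eq, ENNReal.coe_eq_zero]
    exact fun hc => by
      have : (ε : ℝ) = 0 := by rw [hc]; rfl
      rw [hεR] at this; linarith
  have hbound : ∀ N, μ (Sn N) ≤ ENNReal.ofReal ((2 / lam) * J) := by
    intro N
    have h1 : μ (Sn N) ≤ (ε : ENNReal)⁻¹ * ENNReal.ofReal J := by
      calc μ (Sn N) = (ε : ENNReal)⁻¹ * ((ε : ENNReal) * μ (Sn N)) := by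
            rw [← mul_assoc, ENNReal.inv_mul_cancel hεne ENNReal.coe_ne_top, one_mul]
        _ ≤ (ε : ENNReal)⁻¹ * ENNReal.ofReal J :=
            mul_le_mul_right (doob N) _
    refine h1.trans_eq ?_
    have hεcoe : (ε : ENNReal) = ENNReal.ofReal (lam / 2) := by
      rw [ENNReal.ofReal, Real.toNNReal_of_nonneg (by linarith)]
      rfl
    rw [hεcoe, ← ENNReal.ofReal_inv_of_pos (by linarith),
      ← ENNReal.ofReal_mul (by positivity)]
    congr 1
    rw [inv_div]
  have hμle : μ (B ∩ {x | lam < ⨆ m : {m : ℕ // n ≤ m}, |(μ[f | ℱ (m : ℕ)]) x|})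
      ≤ ENNReal.ofReal ((2 / lam) * J) := by
    calc μ (B ∩ {x | lam < ⨆ m : {m : ℕ // n ≤ m}, |(μ[f | ℱ (m : ℕ)]) x|})
        ≤ μ (⋃ N, Sn N) := measure_mono_ae key
      _ = ⨆ N, μ (Sn N) := (hSnMono.directed_le).measure_iUnion
      _ ≤ ENNReal.ofReal ((2 / lam) * J) := iSup_le hbound
  -- identify J with the integral in the statement
  have hJeq : J = ∫ x in B ∩ {x | lam / 2 < |f x|}, |f x| ∂μ := by
    have h1 : J = ∫ x, S.indicator (fun y => |f' y|) x ∂μ := by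
      rw [hJ_def]
      congr 1
      funext x
      by_cases hx : x ∈ S <;>
        simp [hg_def, Set.indicator_apply, hx]
    have h2 : ∫ x, S.indicator (fun y => |f' y|) x ∂μ = ∫ x in S, |f' x| ∂μ :=
      integral_indicator hSm
    have h3 : ∫ x in S, |f' x| ∂μ = ∫ x in S, |f x| ∂μ :=
      setIntegral_congr_ae hSm (hff'.mono fun x hx _ => by rw [hx])
    have h4 : S =ᵐ[μ] ((B ∩ {x | lam / 2 < |f x|} : Set Ω)) := by
      rw [Filter.eventuallyEq_set]
      filter_upwards [hff'] with x hx
      simp [hS_def, hx]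
    rw [h1, h2, h3, setIntegral_congr_set h4]
  rwa [hJeq] at hμle
end

section
/- Let (Ω, F, μ) be a probability space with filtration (F_n) and ω > 0 an integrable weight with ω_n := E(ω | F_n). If ω satisfies A^{SW}_∞ (there is C > 1 with ω_n ≤ C E(ω^s | F_n)^{1/s} a.e. for all s ∈ (0,1) and all n), then there exists C' > 0 such that E(M*_n(ω) | F_n) ≤ C' ω_n a.e. for all n, where M*_n(ω) = sup_{m ≥ n} E(ω | F_m). -/
open MeasureTheory

/-- Pathwise Doob inequality for the running maximum of a nonnegative sequence. -/
theorem pathwise_doob (y t : ℕ → ℝ) (hy : ∀ k, 0 ≤ y k) (ht0 : t 0 = y 0)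
    (hts : ∀ k, t (k + 1) = max (t k) (y (k + 1))) (N : ℕ) :
    (t N) ^ 2 + 4 * ∑ k ∈ Finset.range N, t k * (y (k + 1) - y k) ≤ 4 * t N * y N := by
  have hyt : ∀ k, y k ≤ t k := by
    intro k; cases k with
    | zero => rw [ht0]
    | succ k => rw [hts]; exact le_max_right _ _
  have ht_nonneg : ∀ k, 0 ≤ t k := fun k => (hy k).trans (hyt k)
  induction N with
  | zero => simp [ht0]; nlinarith [hy 0]
  | succ N ih =>
    rw [Finset.sum_range_succ]
    rcases le_total (y (N + 1)) (t N) with h | h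
    · have hT : t (N + 1) = t N := by rw [hts]; exact max_eq_left h
      rw [hT]; nlinarith [ih]
    · have hT : t (N + 1) = y (N + 1) := by rw [hts]; exact max_eq_right h
      rw [hT]
      nlinarith [ih, mul_nonneg (sub_nonneg.2 h) (sub_nonneg.2 h),
        mul_nonneg (sub_nonneg.2 h) (ht_nonneg N), hy (N+1), ht_nonneg N]

/-- Product of two L² functions is integrable. -/
theorem integrable_mul_of_memL2 {α : Type*} {m0 : MeasurableSpace α} {μ : Measure α}
    {f g : α → ℝ} (hf : MemLp f 2 μ) (hg : MemLp g 2 μ) :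
    Integrable (fun x => f x * g x) μ := by
  refine Integrable.mono' ((hf.integrable_sq.add hg.integrable_sq).div_const 2)
    (hf.aestronglyMeasurable.mul hg.aestronglyMeasurable) ?_
  refine Filter.Eventually.of_forall fun x => ?_
  simp only [Pi.add_apply, Pi.div_apply]
  rw [Real.norm_eq_abs, abs_mul]
  nlinarith [sq_nonneg (|f x| - |g x|), sq_abs (f x), sq_abs (g x), abs_nonneg (f x), abs_nonneg (g x)]

/-- The max of two L² functions is L². -/
theorem memL2_max {α : Type*} {m0 : MeasurableSpace α} {μ : Measure α}
    {f g : α → ℝ} (hf : MemLp f 2 μ) (hg : MemLp g 2 μ) :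
    MemLp (fun x => max (f x) (g x)) 2 μ := by
  refine MemLp.mono' (hf.norm.add hg.norm) (hf.aestronglyMeasurable.sup hg.aestronglyMeasurable) ?_
  refine Filter.Eventually.of_forall fun x => ?_
  simp only [Pi.add_apply]
  rw [Real.norm_eq_abs, Real.norm_eq_abs, Real.norm_eq_abs]
  rcases le_total (f x) (g x) with h | h
  · rw [max_eq_right h]; nlinarith [abs_nonneg (f x), abs_nonneg (g x)]
  · rw [max_eq_left h]; nlinarith [abs_nonneg (f x), abs_nonneg (g x)]

/-- Conditional expectation of an L² function is L². -/
theorem memL2_condExp {α : Type*} {m m0 : MeasurableSpace α} (hm : m ≤ m0) {μ : Measure α}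
    [IsFiniteMeasure μ] {f : α → ℝ} (hf : MemLp f 2 μ) : MemLp (μ[f|m]) 2 μ := by
  have hfi : Integrable f μ := hf.integrable one_le_two
  set G : Lp ℝ 2 μ := (condExpL2 ℝ ℝ hm (hf.toLp f) : Lp ℝ 2 μ) with hG
  have hGm : AEStronglyMeasurable[m] (G : α → ℝ) μ := lpMeas.aestronglyMeasurable _
  have heq : (G : α → ℝ) =ᵐ[μ] μ[f|m] := by
    refine ae_eq_condExp_of_forall_setIntegral_eq hm hfi
      (fun s _ _ => ((Lp.memLp G).integrable one_le_two).integrableOn)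
      (fun s hs hμs => ?_) hGm
    rw [integral_condExpL2_eq hm (hf.toLp f) hs hμs.ne]
    exact setIntegral_congr_ae (hm s hs) ((hf.coeFn_toLp).mono fun x hx _ => hx)
  exact (Lp.memLp G).ae_eq heq

theorem stmt19 {Ω : Type*} {m0 : MeasurableSpace Ω} {μ : Measure Ω} [IsProbabilityMeasure μ]
    (ℱ : Filtration ℕ m0)
    {ω : Ω → ℝ} (hω : Measurable ω) (hpos : ∀ x, 0 < ω x) (hint : Integrable ω μ)
    (hSW : ∃ C > 1, ∀ s : ℝ, 0 < s → s < 1 → ∀ n : ℕ,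
      ∀ᵐ x ∂μ, (μ[ω | ℱ n]) x ≤ C * ((μ[fun y => ω y ^ s | ℱ n]) x) ^ (1 / s)) :
    ∃ C' > 0, ∀ n : ℕ,
      ∀ᵐ x ∂μ,
        (μ[fun y => ⨆ m : {m : ℕ // n ≤ m}, (μ[ω | ℱ (m : ℕ)]) y | ℱ n]) x ≤
          C' * (μ[ω | ℱ n]) x := by
  obtain ⟨C, hC1, hSWs⟩ := hSW
  have hC0 : (0:ℝ) < C := lt_trans one_pos hC1
  refine ⟨16 * C, by linarith, fun n => ?_⟩
  -- the square root weight
  set g : Ω → ℝ := fun y => ω y ^ ((1:ℝ)/2) with hg_def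
  have hg_meas : Measurable g := (Real.continuous_rpow_const (by norm_num)).measurable.comp hω
  have hg_nonneg : ∀ x, 0 ≤ g x := fun x => Real.rpow_nonneg (hpos x).le _
  have hgsq : ∀ x, g x ^ 2 = ω x := by
    intro x
    rw [hg_def, ← Real.rpow_natCast (ω x ^ ((1:ℝ)/2)) 2, ← Real.rpow_mul (hpos x).le]
    norm_num
  have hg_int : Integrable g μ := by
    refine Integrable.mono' ((integrable_const (1:ℝ)).add hint) hg_meas.aestronglyMeasurable ?_
    refine Filter.Eventually.of_forall fun x => ?_
    simp only [Pi.add_apply, Pi.one_apply]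
    rw [Real.norm_eq_abs, abs_of_nonneg (hg_nonneg x)]
    rcases le_total (ω x) 1 with h | h
    · have : g x ≤ 1 := Real.rpow_le_one (hpos x).le h (by norm_num)
      linarith [(hpos x).le]
    · have : g x ≤ ω x ^ (1:ℝ) := Real.rpow_le_rpow_of_exponent_le h (by norm_num)
      rw [Real.rpow_one] at this; linarith
  have hg2 : MemLp g 2 μ := by
    rw [memLp_two_iff_integrable_sq hg_meas.aestronglyMeasurable]
    exact hint.congr (Filter.Eventually.of_forall fun x => (hgsq x).symm)
  set Y : ℕ → Ω → ℝ := fun m => μ[g|ℱ m] with hY_def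
  set W : ℕ → Ω → ℝ := fun m => μ[ω|ℱ m] with hW_def
  have hY2 : ∀ m, MemLp (Y m) 2 μ := fun m => memL2_condExp (ℱ.le m) hg2
  have hYsm : ∀ m, StronglyMeasurable[ℱ m] (Y m) := fun m => stronglyMeasurable_condExp
  have hWsm : ∀ m, StronglyMeasurable[ℱ m] (W m) := fun m => stronglyMeasurable_condExp
  have hY_nonneg : ∀ m, 0 ≤ᵐ[μ] Y m := fun m =>
    condExp_nonneg (Filter.Eventually.of_forall hg_nonneg)
  have hW_nonneg : ∀ m, 0 ≤ᵐ[μ] W m := fun m =>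
    condExp_nonneg (Filter.Eventually.of_forall fun x => (hpos x).le)
  have hSW2 : ∀ m, ∀ᵐ x ∂μ, W m x ≤ C * (Y m x) ^ 2 := by
    intro m
    filter_upwards [hSWs (1/2) (by norm_num) (by norm_num) m] with x hx
    have h2 : (1:ℝ) / (1/2) = 2 := by norm_num
    rw [h2] at hx
    rw [show ((μ[fun y => ω y ^ ((1:ℝ)/2)|ℱ m]) x) ^ (2:ℝ)
        = ((μ[fun y => ω y ^ ((1:ℝ)/2)|ℱ m]) x) ^ (2:ℕ) from Real.rpow_natCast _ 2] at hx
    exact hx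
  -- running maxima
  set T : ℕ → Ω → ℝ := fun k => Nat.rec (Y n) (fun k Tk x => max (Tk x) (Y (n + k + 1) x)) k
    with hT_def
  have hTs : ∀ k, T (k + 1) = fun x => max (T k x) (Y (n + k + 1) x) := fun k => rfl
  set U : ℕ → Ω → ℝ := fun k => Nat.rec (W n) (fun k Uk x => max (Uk x) (W (n + k + 1) x)) k
    with hU_def
  have hUs : ∀ k, U (k + 1) = fun x => max (U k x) (W (n + k + 1) x) := fun k => rfl
  have hTsm : ∀ k, StronglyMeasurable[ℱ (n + k)] (T k) := by
    intro k
    induction k with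
    | zero => exact hYsm n
    | succ k ih =>
      rw [hTs k]
      have h1 : Measurable[ℱ (n + k + 1)] (T k) :=
        (ih.mono (ℱ.mono (Nat.le_succ _))).measurable
      have h2 : Measurable[ℱ (n + k + 1)] (Y (n + k + 1)) := (hYsm (n + k + 1)).measurable
      exact (Measurable.max h1 h2).stronglyMeasurable
  have hT2 : ∀ k, MemLp (T k) 2 μ := by
    intro k
    induction k with
    | zero => exact hY2 n
    | succ k ih => rw [hTs k]; exact memL2_max ih (hY2 (n + k + 1))
  have hU_int : ∀ k, Integrable (U k) μ := by
    intro k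
    induction k with
    | zero => exact integrable_condExp
    | succ k ih =>
      rw [hUs k]
      have hgint : Integrable (fun x => |U k x| + |W (n + k + 1) x|) μ :=
        ih.abs.add integrable_condExp.abs
      have hmeas : AEStronglyMeasurable (fun x => max (U k x) (W (n + k + 1) x)) μ :=
        (ih.aestronglyMeasurable.aemeasurable.max
          integrable_condExp.aestronglyMeasurable.aemeasurable).aestronglyMeasurable
      refine Integrable.mono' hgint hmeas (Filter.Eventually.of_forall fun x => ?_)
      rw [Real.norm_eq_abs]
      rcases le_total (U k x) (W (n + k + 1) x) with h | h
      · rw [max_eq_right h]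
        have h1 := abs_nonneg (U k x)
        have h2 := le_abs_self (W (n + k + 1) x)
        have h3 := neg_abs_le (W (n + k + 1) x)
        rcases abs_cases (W (n + k + 1) x) with ⟨he, _⟩ | ⟨he, _⟩ <;> linarith [abs_nonneg (W (n+k+1) x)]
      · rw [max_eq_left h]
        have h1 := abs_nonneg (W (n + k + 1) x)
        rcases abs_cases (U k x) with ⟨he, _⟩ | ⟨he, _⟩ <;> linarith [abs_nonneg (U k x)]
  -- Fact 1 : L² contraction-type bound
  have fact1 : ∀ (m : ℕ) (A : Set Ω), MeasurableSet[ℱ m] A →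
      ∫ x in A, (Y m x) ^ 2 ∂μ ≤ ∫ x in A, ω x ∂μ := by
    intro m A hA
    have hYg_int : Integrable (fun x => Y m x * g x) μ := integrable_mul_of_memL2 (hY2 m) hg2
    have hmul : μ[(fun x => Y m x * g x)|ℱ m] =ᵐ[μ] fun x => Y m x * Y m x :=
      condExp_mul_of_stronglyMeasurable_left (hYsm m) hYg_int hg_int
    have h1 : ∫ x in A, (Y m x) ^ 2 ∂μ = ∫ x in A, Y m x * g x ∂μ := by
      rw [← setIntegral_condExp (ℱ.le m) hYg_int hA]
      refine setIntegral_congr_ae ((ℱ.le m) A hA) ?_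
      filter_upwards [hmul] with x hx _
      rw [hx]; ring
    have h2 : ∫ x in A, Y m x * g x ∂μ ≤ ∫ x in A, ((Y m x) ^ 2 / 2 + ω x / 2) ∂μ := by
      refine setIntegral_mono_ae hYg_int.integrableOn
        (((hY2 m).integrable_sq.div_const 2).add (hint.div_const 2)).integrableOn ?_
      refine Filter.Eventually.of_forall fun x => ?_
      have := hgsq x
      nlinarith [sq_nonneg (Y m x - g x)]
    have h3 : ∫ x in A, ((Y m x) ^ 2 / 2 + ω x / 2) ∂μ
        = (∫ x in A, (Y m x) ^ 2 ∂μ) / 2 + (∫ x in A, ω x ∂μ) / 2 := by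
      rw [integral_add (((hY2 m).integrable_sq.div_const 2).integrableOn)
        ((hint.div_const 2).integrableOn), integral_div, integral_div]
    linarith [h1, h2, h3]
  -- a.e. pointwise bound U ≤ C T²
  have haeU : ∀ᵐ x ∂μ, ∀ k, U k x ≤ C * (T k x) ^ 2 := by
    have h1 : ∀ᵐ x ∂μ, ∀ m, 0 ≤ Y m x ∧ W m x ≤ C * (Y m x) ^ 2 :=
      ae_all_iff.2 fun m => ((hY_nonneg m).and (hSW2 m))
    filter_upwards [h1] with x hx
    have hT_nonneg : ∀ j, 0 ≤ T j x := by
      intro j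
      induction j with
      | zero => exact (hx n).1
      | succ j ih => rw [hTs j]; exact le_trans ih (le_max_left _ _)
    intro k
    induction k with
    | zero => exact (hx n).2
    | succ k ih =>
      rw [hUs k, hTs k]
      refine max_le ?_ ?_
      · refine le_trans ih (mul_le_mul_of_nonneg_left ?_ hC0.le)
        have h2 : T k x ≤ max (T k x) (Y (n + k + 1) x) := le_max_left _ _
        nlinarith [hT_nonneg k]
      · refine le_trans (hx (n + k + 1)).2 (mul_le_mul_of_nonneg_left ?_ hC0.le)
        have h2 : Y (n + k + 1) x ≤ max (T k x) (Y (n + k + 1) x) := le_max_right _ _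
        nlinarith [(hx (n + k + 1)).1]
  -- main set-integral bound
  have fact4 : ∀ A : Set Ω, MeasurableSet[ℱ n] A → ∀ k,
      ∫ x in A, U k x ∂μ ≤ 16 * C * ∫ x in A, ω x ∂μ := by
    intro A hA
    have hAm : ∀ m, n ≤ m → MeasurableSet[ℱ m] A := fun m hm => ℱ.mono hm _ hA
    have hA0 : MeasurableSet A := ℱ.le n _ hA
    -- Fact 2 : martingale orthogonality on A
    have fact2 : ∀ k, ∫ x in A, T k x * Y (n + k + 1) x ∂μ
        = ∫ x in A, T k x * Y (n + k) x ∂μ := by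
      intro k
      set m := n + k with hm_def
      set f : Ω → ℝ := A.indicator (T k) with hf_def
      have hfSM : StronglyMeasurable[ℱ m] f :=
        (hTsm k).indicator (hAm m (Nat.le_add_right n k))
      have hf2 : MemLp f 2 μ := MemLp.indicator hA0 (hT2 k)
      have hint1 : Integrable (f * Y (m + 1)) μ :=
        integrable_mul_of_memL2 hf2 (hY2 (m + 1))
      have hint0 : Integrable (f * Y m) μ :=
        integrable_mul_of_memL2 hf2 (hY2 m)
      have hcm : μ[(f * Y (m + 1))|ℱ m] =ᵐ[μ] f * μ[Y (m + 1)|ℱ m] :=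
        condExp_mul_of_stronglyMeasurable_left hfSM hint1 integrable_condExp
      have htower : μ[Y (m + 1)|ℱ m] =ᵐ[μ] Y m :=
        condExp_condExp_of_le (ℱ.mono (Nat.le_succ m)) (ℱ.le (m + 1))
      have h1 : ∫ x, (f * Y (m + 1)) x ∂μ = ∫ x, (f * Y m) x ∂μ := by
        rw [← integral_condExp (ℱ.le m) (f := f * Y (m + 1))]
        refine integral_congr_ae (hcm.trans ?_)
        filter_upwards [htower] with x hx
        simp only [Pi.mul_apply]
        rw [hx]
      have h2 : ∀ j, ∫ x, (f * Y j) x ∂μ = ∫ x in A, T k x * Y j x ∂μ := by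
        intro j
        rw [← integral_indicator hA0]
        refine integral_congr_ae (Filter.Eventually.of_forall fun x => ?_)
        simp only [Pi.mul_apply, hf_def]
        by_cases hx : x ∈ A
        · simp [Set.indicator_of_mem hx]
        · simp [Set.indicator_of_notMem hx]
      rw [← h2 (m + 1), ← h2 m, h1]
    -- Fact 3 : Doob L² bound on A
    have fact3 : ∀ k, ∫ x in A, (T k x) ^ 2 ∂μ ≤ 16 * ∫ x in A, ω x ∂μ := by
      intro k
      have hae : ∀ᵐ x ∂μ, (T k x) ^ 2 + 4 * ∑ j ∈ Finset.range k,
          T j x * (Y (n + j + 1) x - Y (n + j) x) ≤ 4 * T k x * Y (n + k) x := by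
        have hYa : ∀ᵐ x ∂μ, ∀ m, 0 ≤ Y m x := ae_all_iff.2 hY_nonneg
        filter_upwards [hYa] with x hx
        exact pathwise_doob (fun j => Y (n + j) x) (fun j => T j x)
          (fun j => hx (n + j)) (by simp; exact rfl) (fun j => rfl) k
      have hprod_int : ∀ j, Integrable (fun x => T j x * (Y (n + j + 1) x - Y (n + j) x)) μ := by
        intro j
        have h1 : Integrable (fun x => T j x * Y (n + j + 1) x) μ :=
          integrable_mul_of_memL2 (hT2 j) (hY2 _)
        have h2 : Integrable (fun x => T j x * Y (n + j) x) μ :=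
          integrable_mul_of_memL2 (hT2 j) (hY2 _)
        exact (h1.sub h2).congr (Filter.Eventually.of_forall fun x => by
          simp only [Pi.sub_apply]; ring)
      have hsum_int : Integrable (fun x => (T k x) ^ 2 + 4 * ∑ j ∈ Finset.range k,
          T j x * (Y (n + j + 1) x - Y (n + j) x)) μ := by
        refine (hT2 k).integrable_sq.add ?_
        exact (integrable_finset_sum _ fun j _ => hprod_int j).const_mul 4
      have hTY_int : Integrable (fun x => T k x * Y (n + k) x) μ :=
        integrable_mul_of_memL2 (hT2 k) (hY2 _)
      have hTY4_int : Integrable (fun x => 4 * T k x * Y (n + k) x) μ :=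
        (hTY_int.const_mul 4).congr (Filter.Eventually.of_forall fun x => by ring)
      have hstep1 : ∫ x in A, ((T k x) ^ 2 + 4 * ∑ j ∈ Finset.range k,
          T j x * (Y (n + j + 1) x - Y (n + j) x)) ∂μ
          ≤ ∫ x in A, 4 * T k x * Y (n + k) x ∂μ :=
        setIntegral_mono_ae hsum_int.integrableOn hTY4_int.integrableOn hae
      have hzero : ∀ j, ∫ x in A, T j x * (Y (n + j + 1) x - Y (n + j) x) ∂μ = 0 := by
        intro j
        have h1 : Integrable (fun x => T j x * Y (n + j + 1) x) μ :=
          integrable_mul_of_memL2 (hT2 j) (hY2 _)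
        have h2 : Integrable (fun x => T j x * Y (n + j) x) μ :=
          integrable_mul_of_memL2 (hT2 j) (hY2 _)
        have h3 : ∫ x in A, (T j x * Y (n + j + 1) x - T j x * Y (n + j) x) ∂μ = 0 := by
          rw [integral_sub h1.integrableOn h2.integrableOn, fact2 j, sub_self]
        rw [← h3]
        exact integral_congr_ae (Filter.Eventually.of_forall fun x => by ring)
      have hexp : ∫ x in A, ((T k x) ^ 2 + 4 * ∑ j ∈ Finset.range k,
          T j x * (Y (n + j + 1) x - Y (n + j) x)) ∂μ = ∫ x in A, (T k x) ^ 2 ∂μ := by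
        rw [integral_add (hT2 k).integrable_sq.integrableOn
          (((integrable_finset_sum _ fun j _ => hprod_int j).const_mul 4).integrableOn),
          integral_const_mul, integral_finset_sum _ fun j _ => (hprod_int j).integrableOn]
        simp only [hzero]
        simp
      have hstep2 : ∫ x in A, 4 * T k x * Y (n + k) x ∂μ
          ≤ ∫ x in A, ((T k x) ^ 2 / 2 + 8 * (Y (n + k) x) ^ 2) ∂μ := by
        refine setIntegral_mono_ae hTY4_int.integrableOn
          (((hT2 k).integrable_sq.div_const 2).add
            ((hY2 (n + k)).integrable_sq.const_mul 8)).integrableOn ?_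
        exact Filter.Eventually.of_forall fun x => by
          nlinarith [sq_nonneg (T k x - 4 * Y (n + k) x)]
      have hexp2 : ∫ x in A, ((T k x) ^ 2 / 2 + 8 * (Y (n + k) x) ^ 2) ∂μ
          = (∫ x in A, (T k x) ^ 2 ∂μ) / 2 + 8 * ∫ x in A, (Y (n + k) x) ^ 2 ∂μ := by
        rw [integral_add ((hT2 k).integrable_sq.div_const 2).integrableOn
          ((hY2 (n + k)).integrable_sq.const_mul 8).integrableOn,
          integral_div, integral_const_mul]
      have hY2A := fact1 (n + k) A (hAm _ (Nat.le_add_right n k))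
      rw [hexp] at hstep1
      linarith [hstep1, hstep2, hexp2, hY2A]
    intro k
    have hUle : ∫ x in A, U k x ∂μ ≤ ∫ x in A, C * (T k x) ^ 2 ∂μ :=
      setIntegral_mono_ae (hU_int k).integrableOn
        ((hT2 k).integrable_sq.const_mul C).integrableOn
        (haeU.mono fun x hx => hx k)
    rw [integral_const_mul] at hUle
    calc ∫ x in A, U k x ∂μ ≤ C * ∫ x in A, (T k x) ^ 2 ∂μ := hUle
      _ ≤ C * (16 * ∫ x in A, ω x ∂μ) := mul_le_mul_of_nonneg_left (fact3 k) hC0.le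
      _ = 16 * C * ∫ x in A, ω x ∂μ := by ring
  -- pointwise description of the supremum
  set M : Ω → ℝ := fun y => ⨆ m : {m : ℕ // n ≤ m}, W (m : ℕ) y with hM_def
  have hU0x : ∀ x, U 0 x = W n x := fun x => rfl
  have hUsx : ∀ j x, U (j + 1) x = max (U j x) (W (n + j + 1) x) := fun j x => rfl
  have hUmono : ∀ x, Monotone fun k => U k x := fun x =>
    monotone_nat_of_le_succ fun k => by rw [hUsx k x]; exact le_max_left _ _
  have hWU : ∀ x k, W (n + k) x ≤ U k x := by
    intro x k
    induction k with
    | zero => rw [hU0x x, Nat.add_zero]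
    | succ k _ => rw [hUsx k x]; exact le_max_right _ _
  have hub : ∀ x (b : ℝ), (∀ m : {m : ℕ // n ≤ m}, W (m : ℕ) x ≤ b) ↔ ∀ k, U k x ≤ b := by
    intro x b
    constructor
    · intro h k
      induction k with
      | zero => rw [hU0x x]; exact h ⟨n, le_rfl⟩
      | succ k ih => rw [hUsx k x]; exact max_le ih (h ⟨n + k + 1, by omega⟩)
    · intro h m
      calc W (m : ℕ) x = W (n + ((m : ℕ) - n)) x := by congr 1; omega
        _ ≤ U ((m : ℕ) - n) x := hWU x _
        _ ≤ b := h _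
  have hMsup : ∀ x, M x = ⨆ k, U k x := by
    intro x
    by_cases hb : BddAbove (Set.range fun k => U k x)
    · have hb1 : BddAbove (Set.range fun m : {m : ℕ // n ≤ m} => W (m : ℕ) x) := by
        obtain ⟨b, hbb⟩ := hb
        refine ⟨b, ?_⟩
        rintro _ ⟨m, rfl⟩
        exact (hub x b).2 (fun k => hbb ⟨k, rfl⟩) m
      refine le_antisymm (ciSup_le fun m => ?_) (ciSup_le fun k => ?_)
      · calc W (m : ℕ) x = W (n + ((m : ℕ) - n)) x := by congr 1; omega
          _ ≤ U ((m : ℕ) - n) x := hWU x _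
          _ ≤ ⨆ k, U k x := le_ciSup hb _
      · exact (hub x (M x)).1 (fun m => le_ciSup hb1 m) k
    · have hb1 : ¬ BddAbove (Set.range fun m : {m : ℕ // n ≤ m} => W (m : ℕ) x) := by
        intro hcon
        obtain ⟨b, hbb⟩ := hcon
        refine hb ⟨b, ?_⟩
        rintro _ ⟨k, rfl⟩
        exact (hub x b).1 (fun m => hbb ⟨m, rfl⟩) k
      simp only [hM_def]
      rw [Real.iSup_of_not_bddAbove hb1, Real.iSup_of_not_bddAbove hb]
  -- measurability
  have hU_meas : ∀ k, Measurable (U k) := by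
    intro k
    induction k with
    | zero => exact ((hWsm n).mono (ℱ.le n)).measurable
    | succ k ih =>
      have : U (k + 1) = fun x => max (U k x) (W (n + k + 1) x) := funext fun x => hUsx k x
      rw [this]
      exact ih.max ((hWsm (n + k + 1)).mono (ℱ.le _)).measurable
  have hM_meas : Measurable M := by
    have : M = fun x => ⨆ k, U k x := funext hMsup
    rw [this]
    exact Measurable.iSup fun k => hU_meas k
  have hW_nonneg_all : ∀ᵐ x ∂μ, ∀ m, 0 ≤ W m x := ae_all_iff.2 hW_nonneg
  have hU_nonneg : ∀ᵐ x ∂μ, ∀ k, 0 ≤ U k x := by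
    filter_upwards [hW_nonneg_all] with x hx k
    exact le_trans (hx n) (by rw [← hU0x x]; exact hUmono x (Nat.zero_le k))
  have hM_nonneg : 0 ≤ᵐ[μ] M := by
    filter_upwards [hU_nonneg] with x hx
    simp only [Pi.zero_apply]
    rw [hMsup x]
    by_cases hb : BddAbove (Set.range fun k => U k x)
    · exact le_trans (hx 0) (le_ciSup hb 0)
    · rw [Real.iSup_of_not_bddAbove hb]
  -- monotone convergence
  have hMle : ∀ x, ENNReal.ofReal (M x) ≤ ⨆ k, ENNReal.ofReal (U k x) := by
    intro x
    by_cases hb : BddAbove (Set.range fun k => U k x)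
    · have ht : Filter.Tendsto (fun k => U k x) Filter.atTop (nhds (⨆ k, U k x)) :=
        tendsto_atTop_ciSup (hUmono x) hb
      rw [hMsup x]
      refine le_of_tendsto' (Filter.Tendsto.comp
        (ENNReal.continuous_ofReal.continuousAt).tendsto ht) fun k => ?_
      exact le_iSup (fun k => ENNReal.ofReal (U k x)) k
    · rw [hMsup x, Real.iSup_of_not_bddAbove hb]
      simp
  have key : ∀ A : Set Ω, MeasurableSet[ℱ n] A →
      ∫⁻ x in A, ENNReal.ofReal (M x) ∂μ ≤ ENNReal.ofReal (16 * C * ∫ x in A, ω x ∂μ) := by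
    intro A hA
    have h2 : ∫⁻ x in A, ⨆ k, ENNReal.ofReal (U k x) ∂μ
        = ⨆ k, ∫⁻ x in A, ENNReal.ofReal (U k x) ∂μ :=
      lintegral_iSup (fun k => ENNReal.measurable_ofReal.comp (hU_meas k))
        (fun i j hij x => ENNReal.ofReal_le_ofReal (hUmono x hij))
    have h3 : ∀ k, ∫⁻ x in A, ENNReal.ofReal (U k x) ∂μ
        ≤ ENNReal.ofReal (16 * C * ∫ x in A, ω x ∂μ) := by
      intro k
      rw [← ofReal_integral_eq_lintegral_ofReal (hU_int k).integrableOn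
        (ae_restrict_of_ae (hU_nonneg.mono fun x hx => hx k))]
      exact ENNReal.ofReal_le_ofReal (fact4 A hA k)
    calc ∫⁻ x in A, ENNReal.ofReal (M x) ∂μ
        ≤ ∫⁻ x in A, ⨆ k, ENNReal.ofReal (U k x) ∂μ := lintegral_mono fun x => hMle x
      _ = ⨆ k, ∫⁻ x in A, ENNReal.ofReal (U k x) ∂μ := h2
      _ ≤ ENNReal.ofReal (16 * C * ∫ x in A, ω x ∂μ) := iSup_le h3
  -- integrability of M
  have hM_int : Integrable M μ := by
    refine ⟨hM_meas.aestronglyMeasurable, ?_⟩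
    rw [hasFiniteIntegral_iff_norm]
    have heq : ∫⁻ x, ENNReal.ofReal ‖M x‖ ∂μ = ∫⁻ x, ENNReal.ofReal (M x) ∂μ := by
      refine lintegral_congr_ae ?_
      filter_upwards [hM_nonneg] with x hx
      rw [Real.norm_eq_abs, abs_of_nonneg hx]
    rw [heq]
    have h1 := key Set.univ MeasurableSet.univ
    rw [Measure.restrict_univ] at h1
    exact lt_of_le_of_lt h1 ENNReal.ofReal_lt_top
  -- real version of the set-integral bound
  have hfinal : ∀ A : Set Ω, MeasurableSet[ℱ n] A →
      ∫ x in A, M x ∂μ ≤ 16 * C * ∫ x in A, ω x ∂μ := by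
    intro A hA
    have h1 := key A hA
    rw [← ofReal_integral_eq_lintegral_ofReal hM_int.integrableOn
      (ae_restrict_of_ae hM_nonneg)] at h1
    have hrhs : 0 ≤ 16 * C * ∫ x in A, ω x ∂μ := by
      have : 0 ≤ ∫ x in A, ω x ∂μ := integral_nonneg fun x => (hpos x).le
      positivity
    exact (ENNReal.ofReal_le_ofReal_iff hrhs).1 h1
  -- pass to conditional expectations
  have hcond : ∀ A : Set Ω, MeasurableSet[ℱ n] A →
      ∫ x in A, (16 * C * W n x - (μ[M|ℱ n]) x) ∂μ ≥ 0 := by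
    intro A hA
    have h1 : ∫ x in A, (μ[M|ℱ n]) x ∂μ = ∫ x in A, M x ∂μ :=
      setIntegral_condExp (ℱ.le n) hM_int hA
    have h2 : ∫ x in A, (16 * C * W n x) ∂μ = 16 * C * ∫ x in A, ω x ∂μ := by
      rw [integral_const_mul, setIntegral_condExp (ℱ.le n) hint hA]
    have h3 : ∫ x in A, (16 * C * W n x - (μ[M|ℱ n]) x) ∂μ
        = ∫ x in A, (16 * C * W n x) ∂μ - ∫ x in A, (μ[M|ℱ n]) x ∂μ :=
      integral_sub ((integrable_condExp.const_mul _).integrableOn)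
        integrable_condExp.integrableOn
    rw [h3, h1, h2]
    linarith [hfinal A hA]
  have hD_sm : StronglyMeasurable[ℱ n] fun x => 16 * C * W n x - (μ[M|ℱ n]) x :=
    ((stronglyMeasurable_condExp.const_mul _).sub stronglyMeasurable_condExp)
  have hD_int : Integrable (fun x => 16 * C * W n x - (μ[M|ℱ n]) x) μ :=
    (integrable_condExp.const_mul _).sub integrable_condExp
  have htrim : 0 ≤ᵐ[μ.trim (ℱ.le n)] fun x => 16 * C * W n x - (μ[M|ℱ n]) x := by
    refine ae_nonneg_of_forall_setIntegral_nonneg (hD_int.trim (ℱ.le n) hD_sm) ?_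
    intro s hs _
    rw [← setIntegral_trim (ℱ.le n) hD_sm hs]
    exact hcond s hs
  have hae : 0 ≤ᵐ[μ] fun x => 16 * C * W n x - (μ[M|ℱ n]) x :=
    ae_le_of_ae_le_trim htrim
  filter_upwards [hae] with x hx
  simp only [Pi.zero_apply] at hx
  show (μ[M|ℱ n]) x ≤ 16 * C * W n x
  linarith [hx]
end
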